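/- arXiv:1707.09748 — 3 statements merged into one kernel-verified Lean document; each statement's English description precedes it below -/
import Mathlib

section
/- For every n ≥ 0 and all z, w ∉ 𝕋 ∪ {β_j : j ∈ 𝕒_n} ∪ {α_j : j ∈ 𝕓_n}, the reproducing kernels satisfy k_n^α(z, w)·B̌_n^β(z)·conj(B̌_n^β(w)) = k_n(z, w) = k_n^β(z, w)·B̌_n^α(z)·conj(B̌_n^α(w)). -/
noncomputable section
open MeasureTheory
open scoped Classical

namespace ORF

/-- complex conjugation -/
def conj' (z : ℂ) : ℂ := (starRingEnd ℂ) z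

/-- membership in the unit circle 𝕋 -/
def onT (z : ℂ) : Prop := ‖z‖ = 1

/-- `z` is a (strictly) positive real number -/
def posR (z : ℂ) : Prop := 0 < z.re ∧ z.im = 0

/-- σ_j = conj(α_j)/|α_j| (σ_j = 1 if α_j = 0, i.e. if β_j = ∞) -/
def sig (α : ℕ → ℂ) (j : ℕ) : ℂ :=
  if α j = 0 then 1 else conj' (α j) / ((‖α j‖ : ℝ) : ℂ)

/-- ς_n = ∏_{j=1}^n σ_j -/
def sigProd (α : ℕ → ℂ) (n : ℕ) : ℂ := ∏ j ∈ Finset.Icc 1 n, sig α j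

/-- ϖ_j^α(z) = 1 − conj(α_j)·z, as a polynomial in z -/
def wA (α : ℕ → ℂ) (j : ℕ) : Polynomial ℂ :=
  1 - Polynomial.C (conj' (α j)) * Polynomial.X

/-- ϖ_j^β(z) = 1 − conj(β_j)·z = 1 − z/α_j, and −z when β_j = ∞ (α_j = 0) -/
def wB (α : ℕ → ℂ) (j : ℕ) : Polynomial ℂ :=
  if α j = 0 then -Polynomial.X else 1 - Polynomial.C (α j)⁻¹ * Polynomial.X

/-- ϖ_j = ϖ_j^γ (γ_j = α_j when `c j`, γ_j = β_j otherwise) -/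
def wG (α : ℕ → ℂ) (c : ℕ → Bool) (j : ℕ) : Polynomial ℂ :=
  if c j then wA α j else wB α j

/-- π_n^α -/
def piA (α : ℕ → ℂ) (n : ℕ) : Polynomial ℂ := ∏ j ∈ Finset.Icc 1 n, wA α j
/-- π_n^β -/
def piB (α : ℕ → ℂ) (n : ℕ) : Polynomial ℂ := ∏ j ∈ Finset.Icc 1 n, wB α j
/-- π_n = π_n^γ -/
def piG (α : ℕ → ℂ) (c : ℕ → Bool) (n : ℕ) : Polynomial ℂ := ∏ j ∈ Finset.Icc 1 n, wG α c j

/-- 𝕒_n = {1 ≤ j ≤ n : γ_j = α_j} -/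
def aSet (c : ℕ → Bool) (n : ℕ) : Finset ℕ := (Finset.Icc 1 n).filter (fun j => c j = true)
/-- 𝕓_n = {1 ≤ j ≤ n : γ_j = β_j} -/
def bSet (c : ℕ → Bool) (n : ℕ) : Finset ℕ := (Finset.Icc 1 n).filter (fun j => c j = false)

/-- Blaschke factor ζ_j^α -/
def zetaA (α : ℕ → ℂ) (j : ℕ) (z : ℂ) : ℂ :=
  if α j = 0 then z else sig α j * (z - α j) / (1 - conj' (α j) * z)

/-- Blaschke factor ζ_j^β (β_j = 1/conj(α_j); ζ_j^β(z) = 1/z when β_j = ∞) -/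
def zetaB (α : ℕ → ℂ) (j : ℕ) (z : ℂ) : ℂ :=
  if α j = 0 then z⁻¹ else sig α j * (z - (conj' (α j))⁻¹) / (1 - z / α j)

/-- ζ_j = ζ_j^γ -/
def zetaG (α : ℕ → ℂ) (c : ℕ → Bool) (j : ℕ) (z : ℂ) : ℂ :=
  if c j then zetaA α j z else zetaB α j z

/-- B_n^α -/
def BA (α : ℕ → ℂ) (n : ℕ) (z : ℂ) : ℂ := ∏ j ∈ Finset.Icc 1 n, zetaA α j z
/-- B_n^β -/
def BB (α : ℕ → ℂ) (n : ℕ) (z : ℂ) : ℂ := ∏ j ∈ Finset.Icc 1 n, zetaB α j z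
/-- B̌_n^α = ∏_{j ∈ 𝕒_n} ζ_j -/
def BcA (α : ℕ → ℂ) (c : ℕ → Bool) (n : ℕ) (z : ℂ) : ℂ := ∏ j ∈ aSet c n, zetaG α c j z
/-- B̌_n^β = ∏_{j ∈ 𝕓_n} ζ_j -/
def BcB (α : ℕ → ℂ) (c : ℕ → Bool) (n : ℕ) (z : ℂ) : ℂ := ∏ j ∈ bSet c n, zetaG α c j z

/-- ζ̌_n^α (= ζ_n if γ_n = α_n, = 1 otherwise) -/
def zcA (α : ℕ → ℂ) (c : ℕ → Bool) (n : ℕ) (z : ℂ) : ℂ :=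
  if c n then zetaG α c n z else 1
/-- ζ̌_n^β (= ζ_n if γ_n = β_n, = 1 otherwise) -/
def zcB (α : ℕ → ℂ) (c : ℕ → Bool) (n : ℕ) (z : ℂ) : ℂ :=
  if c n then 1 else zetaG α c n z

/-- The space L_n^ν = {p/π_n^ν : deg p ≤ n}; a function `f` belongs to it if it agrees
with such a rational function on the unit circle (where all these objects live). -/
def Lsp (pip : ℕ → Polynomial ℂ) (n : ℕ) : Set (ℂ → ℂ) :=
  {f | ∃ p : Polynomial ℂ, p.natDegree ≤ n ∧ ∀ z, onT z → f z = p.eval z / (pip n).eval z}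

/-- L_{n*}^ν = {f_* : f ∈ L_n^ν} (again as functions on the unit circle, where
f_*(z) = conj(f(1/conj z)) = conj(f(z))) -/
def LstarSp (pip : ℕ → Polynomial ℂ) (n : ℕ) : Set (ℂ → ℂ) :=
  {f | ∃ p : Polynomial ℂ, p.natDegree ≤ n ∧ ∀ z, onT z → f z = conj' (p.eval z / (pip n).eval z)}

/-- R_n^ν = L_n^ν · L_{n*}^ν -/
def Rset (pip : ℕ → Polynomial ℂ) (n : ℕ) : Set (ℂ → ℂ) :=
  {h | ∃ g ∈ Lsp pip n, ∃ k ∈ LstarSp pip n, ∀ z, onT z → h z = g z * k z}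

/-- the substar conjugate f_*(z) = conj(f(1/conj z)) -/
def substar (f : ℂ → ℂ) : ℂ → ℂ := fun z => conj' (f ((conj' z)⁻¹))

/-- superstar conjugate q^*(z) = z^n conj(q(1/conj z)) of a polynomial of degree ≤ n -/
def pstar (n : ℕ) (q : Polynomial ℂ) : Polynomial ℂ :=
  ∑ k ∈ Finset.range (n + 1), Polynomial.C (conj' (q.coeff k)) * Polynomial.X ^ (n - k)

/-- the inner product ⟨f,g⟩ = ∫ conj(f) g dμ -/
def inn (μ : Measure ℂ) (f g : ℂ → ℂ) : ℂ := ∫ z, conj' (f z) * g z ∂μ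

/-- the reciprocal ORF φ_n^{ν*} = B_n^ν (φ_n^ν)_* (resp. φ_n^* = B̌_n^α B̌_n^β (φ_n)_*),
written out as the rational function ς_n p_n^{ν*}/π_n^ν -/
def starF (α : ℕ → ℂ) (pip : ℕ → Polynomial ℂ) (p : ℕ → Polynomial ℂ) (n : ℕ) (z : ℂ) : ℂ :=
  sigProd α n * (pstar n (p n)).eval z / (pip n).eval z

/-- `μ` is a probability measure on the unit circle 𝕋, positive a.e. on 𝕋 -/
structure CircleMeasure (μ : Measure ℂ) : Prop where
  prob : IsProbabilityMeasure μ
  circ : μ {z | ¬ onT z} = 0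
  pos : ∀ U : Set ℂ, IsOpen U → (U ∩ {z | onT z}).Nonempty → 0 < μ U

/-- `φ` (with numerators `p`) is the sequence of orthonormal rational functions for the
nested spaces `Lsp pip`: φ_0 = 1, φ_n = p_n/π_n ∈ L_n \ L_{n-1}, φ_n ⊥ L_{n-1}, ‖φ_n‖ = 1. -/
structure IsORF (μ : Measure ℂ) (pip : ℕ → Polynomial ℂ) (φ : ℕ → ℂ → ℂ)
    (p : ℕ → Polynomial ℂ) : Prop where
  rep : ∀ n z, φ n z = (p n).eval z / (pip n).eval z
  deg : ∀ n, (p n).natDegree ≤ n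
  p0 : p 0 = 1
  notmem : ∀ n, 1 ≤ n → φ n ∉ Lsp pip (n - 1)
  orth : ∀ n, 1 ≤ n → ∀ f ∈ Lsp pip (n - 1), inn μ (φ n) f = 0
  norm : ∀ n, inn μ (φ n) (φ n) = 1

/-- normalization φ_n^{α*}(α_n) > 0 -/
def normA (α : ℕ → ℂ) (p : ℕ → Polynomial ℂ) (n : ℕ) : Prop :=
  posR (sigProd α n * (pstar n (p n)).eval (α n) / (piA α n).eval (α n))

/-- normalization φ_n^{β*}(β_n) > 0 (when β_n = ∞ the value is the limit,
i.e. the ratio of the coefficients of z^n) -/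
def normB (α : ℕ → ℂ) (p : ℕ → Polynomial ℂ) (n : ℕ) : Prop :=
  if α n = 0 then posR (sigProd α n * (pstar n (p n)).coeff n / (piB α n).coeff n)
  else posR (sigProd α n * (pstar n (p n)).eval ((conj' (α n))⁻¹) /
    (piB α n).eval ((conj' (α n))⁻¹))

/-- π̌_n^α = ∏_{j∈𝕒_n} ϖ_j -/
def pidA (α : ℕ → ℂ) (c : ℕ → Bool) (n : ℕ) : Polynomial ℂ := ∏ j ∈ aSet c n, wA α j
/-- π̌_n^β = ∏_{j∈𝕓_n} ϖ_j -/
def pidB (α : ℕ → ℂ) (c : ℕ → Bool) (n : ℕ) : Polynomial ℂ := ∏ j ∈ bSet c n, wB α j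
/-- ∏_{j∈𝕓_n}(z − β_j), a factor being −1 when β_j = ∞ -/
def dB (α : ℕ → ℂ) (c : ℕ → Bool) (n : ℕ) : Polynomial ℂ :=
  ∏ j ∈ bSet c n,
    (if α j = 0 then (-1 : Polynomial ℂ) else Polynomial.X - Polynomial.C ((conj' (α j))⁻¹))
/-- ∏_{j∈𝕒_n}(z − α_j) -/
def dA (α : ℕ → ℂ) (c : ℕ → Bool) (n : ℕ) : Polynomial ℂ :=
  ∏ j ∈ aSet c n, (Polynomial.X - Polynomial.C (α j))

/-- ς̌_n^α = ∏_{j∈𝕒_n} σ_j -/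
def sigcA (α : ℕ → ℂ) (c : ℕ → Bool) (n : ℕ) : ℂ := ∏ j ∈ aSet c n, sig α j
/-- ς̌_n^β = ∏_{j∈𝕓_n} σ_j -/
def sigcB (α : ℕ → ℂ) (c : ℕ → Bool) (n : ℕ) : ℂ := ∏ j ∈ bSet c n, sig α j

/-- normalization for the γ-sequence: (φ_n^*/B̌_n^β)(α_n) > 0 when γ_n = α_n and
(φ_n^*/B̌_n^α)(β_n) > 0 when γ_n = β_n, written via the identities
φ_n^*/B̌_n^β = ς̌_n^α p_n^*/(π̌_n^α ∏_{j∈𝕓_n}(z−β_j)) and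
φ_n^*/B̌_n^α = ς̌_n^β p_n^*/(π̌_n^β ∏_{j∈𝕒_n}(z−α_j)) (the value at β_n = ∞ being the
limit, i.e. the ratio of the coefficients of z^n). -/
def normG (α : ℕ → ℂ) (c : ℕ → Bool) (p : ℕ → Polynomial ℂ) (n : ℕ) : Prop :=
  if c n then
    posR (sigcA α c n * (pstar n (p n)).eval (α n) /
      ((pidA α c n).eval (α n) * (dB α c n).eval (α n)))
  else if α n = 0 then
    posR (sigcB α c n * (pstar n (p n)).coeff n / ((pidB α c n) * dA α c n).coeff n)
  else
    posR (sigcB α c n * (pstar n (p n)).eval ((conj' (α n))⁻¹) /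
      ((pidB α c n) * dA α c n).eval ((conj' (α n))⁻¹))

/-- the reproducing kernel k_n(z,w) = Σ_{k=0}^n φ_k(z) conj(φ_k(w)) -/
def ker (φ : ℕ → ℂ → ℂ) (n : ℕ) (z w : ℂ) : ℂ :=
  ∑ k ∈ Finset.range (n + 1), φ k z * conj' (φ k w)

/-- evaluation of a polynomial of degree ≤ m at γ_j (its coefficient of z^m when γ_j = ∞) -/
def gEval (α : ℕ → ℂ) (c : ℕ → Bool) (m j : ℕ) (q : Polynomial ℂ) : ℂ :=
  if c j then q.eval (α j)
  else if α j = 0 then q.coeff m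
  else q.eval ((conj' (α j))⁻¹)

/-- evaluation of a polynomial of degree ≤ m at β_j (its coefficient of z^m when β_j = ∞) -/
def bEval (α : ℕ → ℂ) (m j : ℕ) (q : Polynomial ℂ) : ℂ :=
  if α j = 0 then q.coeff m else q.eval ((conj' (α j))⁻¹)

/-- η_n^α (the unimodular constant in the Szegő parameter λ_n^α) -/
def etaA (α : ℕ → ℂ) (p : ℕ → Polynomial ℂ) (n : ℕ) : ℂ :=
  conj' (sigProd α (n - 2)) * conj' ((pstar (n - 1) (p (n - 1))).eval (α (n - 1))) /
    ((pstar (n - 1) (p (n - 1))).eval (α (n - 1)))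

/-- the Szegő parameter λ_n^α -/
def lamA (α : ℕ → ℂ) (p : ℕ → Polynomial ℂ) (n : ℕ) : ℂ :=
  etaA α p n * (p n).eval (α (n - 1)) / conj' ((pstar n (p n)).eval (α (n - 1)))

/-- η_n^β -/
def etaB (α : ℕ → ℂ) (p : ℕ → Polynomial ℂ) (n : ℕ) : ℂ :=
  conj' (sigProd α (n - 2)) * conj' (bEval α (n - 1) (n - 1) (pstar (n - 1) (p (n - 1)))) /
    (bEval α (n - 1) (n - 1) (pstar (n - 1) (p (n - 1))))

/-- the Szegő parameter λ_n^β -/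
def lamB (α : ℕ → ℂ) (p : ℕ → Polynomial ℂ) (n : ℕ) : ℂ :=
  etaB α p n * bEval α n (n - 1) (p n) / conj' (bEval α n (n - 1) (pstar n (p n)))

/-- η_n = η_n^γ -/
def etaG (α : ℕ → ℂ) (c : ℕ → Bool) (p : ℕ → Polynomial ℂ) (n : ℕ) : ℂ :=
  conj' (sigProd α (n - 2)) * conj' (gEval α c (n - 1) (n - 1) (pstar (n - 1) (p (n - 1)))) /
    (gEval α c (n - 1) (n - 1) (pstar (n - 1) (p (n - 1))))

/-- the Szegő parameter λ_n = λ_n^γ -/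
def lamG (α : ℕ → ℂ) (c : ℕ → Bool) (p : ℕ → Polynomial ℂ) (n : ℕ) : ℂ :=
  etaG α c p n * gEval α c n (n - 1) (p n) / conj' (gEval α c n (n - 1) (pstar n (p n)))

/-- functions of the second kind: ψ(z) = ∫ E(t,z) φ(t) − D(t,z) φ(z) dμ(t) -/
def psi (μ : Measure ℂ) (φ : ℂ → ℂ) (z : ℂ) : ℂ :=
  ∫ t, (2 * t / (t - z)) * φ t - ((t + z) / (t - z)) * φ z ∂μ

/-- ∏_{j=k+1}^n ϖ_j -/
def tailProd (α : ℕ → ℂ) (c : ℕ → Bool) (n k : ℕ) : Polynomial ℂ :=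
  ∏ j ∈ Finset.Icc (k + 1) n, wG α c j

/-- the numerator C_n(z,w) of the kernel k_n = C_n/(π_n(z) conj(π_n(w))), as a polynomial
in w after conjugation: C_n(z,w) = conj((CnPoly n z).eval w) -/
def CnPoly (α : ℕ → ℂ) (c : ℕ → Bool) (p : ℕ → Polynomial ℂ) (n : ℕ) (z : ℂ) : Polynomial ℂ :=
  ∑ k ∈ Finset.range (n + 1),
    Polynomial.C (conj' ((p k).eval z * (tailProd α c n k).eval z)) * ((p k) * tailProd α c n k)

/-- z ↦ C_n(z,∞) (the coefficient of w^n of w ↦ C_n(z,w)), as a polynomial in z -/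
def CnInf (α : ℕ → ℂ) (c : ℕ → Bool) (p : ℕ → Polynomial ℂ) (n : ℕ) : Polynomial ℂ :=
  ∑ k ∈ Finset.range (n + 1),
    ((p k) * tailProd α c n k) * Polynomial.C (conj' (((p k) * tailProd α c n k).coeff n))

/-- ϖ_n^*(z) = z − γ_n (= −1 when γ_n = ∞) -/
def wstarG (α : ℕ → ℂ) (c : ℕ → Bool) (n : ℕ) : Polynomial ℂ :=
  if c n then Polynomial.X - Polynomial.C (α n)
  else if α n = 0 then -1
  else Polynomial.X - Polynomial.C ((conj' (α n))⁻¹)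

end ORF

namespace ORFAux
open ORF Polynomial Finset

lemma conj'_def (z : ℂ) : conj' z = (starRingEnd ℂ) z := rfl

@[simp] lemma conj'_mul (a b : ℂ) : conj' (a * b) = conj' a * conj' b := map_mul _ a b
@[simp] lemma conj'_div (a b : ℂ) : conj' (a / b) = conj' a / conj' b := map_div₀ _ a b
@[simp] lemma conj'_inv (a : ℂ) : conj' a⁻¹ = (conj' a)⁻¹ := map_inv₀ _ a
@[simp] lemma conj'_conj' (a : ℂ) : conj' (conj' a) = a := Complex.conj_conj a
@[simp] lemma conj'_zero : conj' 0 = 0 := map_zero _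
@[simp] lemma conj'_one : conj' 1 = 1 := map_one _
@[simp] lemma conj'_eq_zero {a : ℂ} : conj' a = 0 ↔ a = 0 := map_eq_zero _
@[simp] lemma abs_conj' (a : ℂ) : ‖conj' a‖ = ‖a‖ := Complex.norm_conj a

lemma onT_ne_zero {t : ℂ} (h : onT t) : t ≠ 0 := by
  intro h0; rw [h0] at h; simp [onT] at h

lemma onT_mul_conj {t : ℂ} (h : onT t) : t * conj' t = 1 := by
  have := Complex.mul_conj t
  rw [Complex.normSq_eq_norm_sq, h] at this
  simpa [conj'] using this

lemma abs_sig (α : ℕ → ℂ) (i : ℕ) : ‖sig α i‖ = 1 := by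
  unfold sig
  split
  · simp
  · rename_i h
    rw [norm_div, abs_conj', Complex.norm_real, Real.norm_of_nonneg (norm_nonneg _)]
    field_simp [norm_ne_zero_iff.mpr h]

lemma sig_ne_zero (α : ℕ → ℂ) (i : ℕ) : sig α i ≠ 0 := by
  intro h
  have := abs_sig α i
  rw [h] at this; simp at this

/-- the constant relating ζ_j^β and ϖ_j^α/ϖ_j^β -/
def cc (α : ℕ → ℂ) (i : ℕ) : ℂ := if α i = 0 then -1 else -(sig α i) / conj' (α i)

lemma cc_ne_zero (α : ℕ → ℂ) (i : ℕ) : cc α i ≠ 0 := by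
  unfold cc
  split
  · simp
  · rename_i h
    simp [sig_ne_zero, h, _root_.div_eq_zero_iff]

lemma wA_eval (α : ℕ → ℂ) (i : ℕ) (z : ℂ) : (wA α i).eval z = 1 - conj' (α i) * z := by
  simp [wA]

lemma wB_eval (α : ℕ → ℂ) (i : ℕ) (z : ℂ) :
    (wB α i).eval z = if α i = 0 then -z else 1 - (α i)⁻¹ * z := by
  unfold wB; split <;> simp

lemma wA_eval_ne {α : ℕ → ℂ} {i : ℕ} (hα : ‖α i‖ < 1) {z : ℂ}
    (hz : ‖z‖ ≤ 1) : (wA α i).eval z ≠ 0 := by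
  rw [wA_eval]
  intro h
  have h1 : conj' (α i) * z = 1 := by linear_combination -h
  have := congrArg (‖·‖) h1
  rw [norm_mul, abs_conj', norm_one] at this
  nlinarith [norm_nonneg (α i), norm_nonneg z]

lemma wB_eval_ne_onT {α : ℕ → ℂ} {i : ℕ} (hα : ‖α i‖ < 1) {t : ℂ}
    (ht : onT t) : (wB α i).eval t ≠ 0 := by
  rw [wB_eval]
  split
  · simpa using onT_ne_zero ht
  · rename_i h
    intro h0
    have h1 : (α i)⁻¹ * t = 1 := by linear_combination -h0
    have := congrArg (‖·‖) h1
    rw [norm_mul, norm_inv, norm_one, ht] at this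
    have hpos : ‖α i‖ ≠ 0 := norm_ne_zero_iff.mpr h
    rw [mul_one] at this
    have : ‖α i‖ = 1 := by
      field_simp at this
      linarith [this]
    linarith

lemma zetaB_eq (α : ℕ → ℂ) (i : ℕ) (z : ℂ) (h : (wB α i).eval z ≠ 0) :
    zetaB α i z = cc α i * ((wA α i).eval z / (wB α i).eval z) := by
  rw [wA_eval, wB_eval] at *
  unfold zetaB cc
  split
  · rename_i h0
    simp only [if_pos h0] at h ⊢
    simp only [h0, conj'_zero, zero_mul, sub_zero, one_mul]
    rw [neg_one_mul, div_neg, neg_neg, one_div]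
  · rename_i h0
    simp only [if_neg h0] at h ⊢
    have hc : conj' (α i) ≠ 0 := by simpa using h0
    have h' : 1 - z / α i ≠ 0 := by
      intro hd; apply h; rw [← hd]; rw [div_eq_mul_inv]; ring
    field_simp
    ring

lemma sq_sig {α : ℕ → ℂ} {i : ℕ} (h : α i ≠ 0) : sig α i * α i = ((‖α i‖ : ℝ) : ℂ) := by
  unfold sig
  rw [if_neg h]
  have h2 : ((‖α i‖ : ℝ) : ℂ) ≠ 0 := by
    simpa using norm_ne_zero_iff.mpr h
  rw [div_mul_eq_mul_div, div_eq_iff h2]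
  have := Complex.mul_conj (α i)
  rw [Complex.normSq_eq_norm_sq] at this
  push_cast at this ⊢
  rw [conj'_def]
  linear_combination this

lemma sig_mul_abs {α : ℕ → ℂ} {i : ℕ} (h : α i ≠ 0) :
    sig α i * ((‖α i‖ : ℝ) : ℂ) = conj' (α i) := by
  unfold sig
  rw [if_neg h]
  have h2 : ((‖α i‖ : ℝ) : ℂ) ≠ 0 := by simpa using norm_ne_zero_iff.mpr h
  field_simp

lemma zetaA_eq (α : ℕ → ℂ) (i : ℕ) (z : ℂ) (h : (wA α i).eval z ≠ 0) :
    zetaA α i z = (cc α i)⁻¹ * ((wB α i).eval z / (wA α i).eval z) := by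
  rw [wA_eval] at *
  rw [wB_eval]
  unfold zetaA cc
  split
  · rename_i h0
    simp only [h0, conj'_zero, zero_mul, sub_zero] at h ⊢
    norm_num
  · rename_i h0
    have hc : conj' (α i) ≠ 0 := by simpa using h0
    have hs := sig_ne_zero α i
    have hsq := sq_sig h0
    have hsq2 := sig_mul_abs h0
    have e : sig α i ^ 2 * α i = conj' (α i) := by rw [sq, mul_assoc, hsq, hsq2]
    field_simp
    rw [e]; ring

lemma abs_wA_eval_onT {α : ℕ → ℂ} (i : ℕ) {t : ℂ} (ht : onT t) :
    ‖(wA α i).eval t‖ = ‖t - α i‖ := by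
  have h1 : conj' ((wA α i).eval t) = conj' t * (t - α i) := by
    simp only [wA_eval, conj'_def, map_sub, map_mul, map_one, Complex.conj_conj]
    simp only [← conj'_def]
    linear_combination -onT_mul_conj ht
  have := congrArg (‖·‖) h1
  rw [abs_conj'] at this
  rw [this, norm_mul, abs_conj', ht, one_mul]

lemma abs_wB_eval_onT {α : ℕ → ℂ} {i : ℕ} (h : α i ≠ 0) {t : ℂ} (_ht : onT t) :
    ‖(wB α i).eval t‖ = ‖t - α i‖ / ‖α i‖ := by
  have h1 : (wB α i).eval t = -(t - α i) / α i := by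
    rw [wB_eval, if_neg h]; field_simp; ring
  rw [h1, norm_div, norm_neg]

lemma sub_ne_of_onT {α : ℕ → ℂ} {i : ℕ} (hα : ‖α i‖ < 1) {t : ℂ} (ht : onT t) :
    t - α i ≠ 0 := by
  intro h
  have : t = α i := by linear_combination h
  rw [← this, ht] at hα
  exact lt_irrefl 1 hα

lemma abs_cc {α : ℕ → ℂ} {i : ℕ} (h : α i ≠ 0) :
    ‖cc α i‖ = (‖α i‖)⁻¹ := by
  unfold cc
  rw [if_neg h, norm_div, norm_neg, abs_sig, abs_conj']
  exact one_div _

lemma abs_zetaA_onT {α : ℕ → ℂ} {i : ℕ} (hα : ‖α i‖ < 1) {t : ℂ} (ht : onT t) :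
    ‖zetaA α i t‖ = 1 := by
  unfold zetaA
  split
  · exact ht
  · rename_i h0
    rw [norm_div, norm_mul, abs_sig, one_mul]
    have hA : ‖1 - conj' (α i) * t‖ = ‖t - α i‖ := by
      have := abs_wA_eval_onT (α := α) i ht
      rw [wA_eval] at this; exact this
    rw [hA]
    have := sub_ne_of_onT hα ht
    rw [div_self (norm_ne_zero_iff.mpr this)]

lemma abs_zetaB_onT {α : ℕ → ℂ} {i : ℕ} (hα : ‖α i‖ < 1) {t : ℂ} (ht : onT t) :
    ‖zetaB α i t‖ = 1 := by
  by_cases h0 : α i = 0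
  · unfold zetaB; rw [if_pos h0, norm_inv, ht]; norm_num
  · rw [zetaB_eq α i t (wB_eval_ne_onT (hα) ht), norm_mul, norm_div, abs_cc h0,
      abs_wA_eval_onT i ht, abs_wB_eval_onT h0 ht]
    have h1 : ‖t - α i‖ ≠ 0 := norm_ne_zero_iff.mpr (sub_ne_of_onT hα ht)
    have h2 : ‖α i‖ ≠ 0 := norm_ne_zero_iff.mpr h0
    field_simp

lemma conj_mul_self_of_abs_one {x : ℂ} (h : ‖x‖ = 1) : conj' x * x = 1 := by
  have := Complex.mul_conj x
  rw [Complex.normSq_eq_norm_sq, h] at this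
  rw [conj'_def, mul_comm]
  simpa using this

lemma abs_BcA_onT (α : ℕ → ℂ) (c : ℕ → Bool) (n : ℕ) (hα : ∀ j, ‖α j‖ < 1)
    {t : ℂ} (ht : onT t) : ‖BcA α c n t‖ = 1 := by
  unfold BcA
  rw [norm_prod]
  apply Finset.prod_eq_one
  intro i hi
  have hci : c i = true := (Finset.mem_filter.mp hi).2
  unfold zetaG
  rw [if_pos hci]
  exact abs_zetaA_onT (hα i) ht

lemma abs_BcB_onT (α : ℕ → ℂ) (c : ℕ → Bool) (n : ℕ) (hα : ∀ j, ‖α j‖ < 1)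
    {t : ℂ} (ht : onT t) : ‖BcB α c n t‖ = 1 := by
  unfold BcB
  rw [norm_prod]
  apply Finset.prod_eq_one
  intro i hi
  have hci : c i = false := (Finset.mem_filter.mp hi).2
  unfold zetaG
  rw [hci]
  simp only [Bool.false_eq_true, if_false]
  exact abs_zetaB_onT (hα i) ht

lemma prod_split {M : Type*} [CommMonoid M] (f : ℕ → M) {j n : ℕ} (h : j ≤ n) :
    (∏ i ∈ Finset.Icc 1 n, f i) = (∏ i ∈ Finset.Icc 1 j, f i) * ∏ i ∈ Finset.Ioc j n, f i := by
  have e : ∀ m : ℕ, Finset.Icc 1 m = Finset.Ioc 0 m := by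
    intro m; ext x; simp [Finset.mem_Icc, Finset.mem_Ioc]; omega
  rw [e n, e j]
  exact (Finset.prod_Ioc_consecutive f (Nat.zero_le j) h).symm

lemma eval_prod_ne_zero_iff {s : Finset ℕ} {f : ℕ → Polynomial ℂ} {z : ℂ} :
    (∏ i ∈ s, f i).eval z ≠ 0 ↔ ∀ i ∈ s, (f i).eval z ≠ 0 := by
  rw [Polynomial.eval_prod, Finset.prod_ne_zero_iff]

lemma bSet_eq (c : ℕ → Bool) (n : ℕ) :
    bSet c n = (Finset.Icc 1 n).filter (fun j => ¬ (c j = true)) := by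
  unfold bSet
  apply Finset.filter_congr
  intro i _
  simp

lemma piG_split (α : ℕ → ℂ) (c : ℕ → Bool) (n : ℕ) :
    piG α c n = (∏ i ∈ aSet c n, wA α i) * ∏ i ∈ bSet c n, wB α i := by
  unfold piG
  rw [← Finset.prod_filter_mul_prod_filter_not (Finset.Icc 1 n) (fun j => c j = true)]
  congr 1
  · apply Finset.prod_congr rfl
    intro i hi
    unfold wG
    rw [if_pos (Finset.mem_filter.mp hi).2]
  · rw [← bSet_eq]
    apply Finset.prod_congr rfl
    intro i hi
    unfold wG
    have : c i = false := (Finset.mem_filter.mp hi).2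
    rw [this]
    simp

lemma piA_filter_split (α : ℕ → ℂ) (c : ℕ → Bool) (n : ℕ) :
    piA α n = (∏ i ∈ aSet c n, wA α i) * ∏ i ∈ bSet c n, wA α i := by
  unfold piA
  rw [← Finset.prod_filter_mul_prod_filter_not (Finset.Icc 1 n) (fun j => c j = true), ← bSet_eq]
  rfl

lemma piB_filter_split (α : ℕ → ℂ) (c : ℕ → Bool) (n : ℕ) :
    piB α n = (∏ i ∈ aSet c n, wB α i) * ∏ i ∈ bSet c n, wB α i := by
  unfold piB
  rw [← Finset.prod_filter_mul_prod_filter_not (Finset.Icc 1 n) (fun j => c j = true), ← bSet_eq]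
  rfl

lemma wG_eval_ne_onT {α : ℕ → ℂ} (c : ℕ → Bool) {i : ℕ} (hα : ‖α i‖ < 1)
    {t : ℂ} (ht : onT t) : (wG α c i).eval t ≠ 0 := by
  unfold wG
  split
  · exact wA_eval_ne hα (le_of_eq ht)
  · exact wB_eval_ne_onT hα ht

/-- natDegree bounds -/
lemma wA_natDegree (α : ℕ → ℂ) (i : ℕ) : (wA α i).natDegree ≤ 1 := by
  unfold wA
  refine le_trans (Polynomial.natDegree_sub_le _ _) ?_
  simp only [Polynomial.natDegree_one]
  refine max_le (by norm_num) (le_trans (Polynomial.natDegree_C_mul_le _ _) ?_)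
  simp [Polynomial.natDegree_X]

lemma wB_natDegree (α : ℕ → ℂ) (i : ℕ) : (wB α i).natDegree ≤ 1 := by
  unfold wB
  split
  · simp [Polynomial.natDegree_neg, Polynomial.natDegree_X]
  · refine le_trans (Polynomial.natDegree_sub_le _ _) ?_
    simp only [Polynomial.natDegree_one]
    refine max_le (by norm_num) (le_trans (Polynomial.natDegree_C_mul_le _ _) ?_)
    simp [Polynomial.natDegree_X]

lemma wG_natDegree (α : ℕ → ℂ) (c : ℕ → Bool) (i : ℕ) : (wG α c i).natDegree ≤ 1 := by
  unfold wG
  split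
  · exact wA_natDegree α i
  · exact wB_natDegree α i

lemma prod_w_natDegree {w : ℕ → Polynomial ℂ} (hw : ∀ i, (w i).natDegree ≤ 1)
    (s : Finset ℕ) : (∏ i ∈ s, w i).natDegree ≤ s.card := by
  refine le_trans (Polynomial.natDegree_prod_le s w) ?_
  calc (∑ i ∈ s, (w i).natDegree) ≤ ∑ _i ∈ s, 1 := Finset.sum_le_sum (fun i _ => hw i)
  _ = s.card := by simp

/-- conjugate symmetry of the inner product -/
lemma inn_conj (μ : Measure ℂ) (f g : ℂ → ℂ) : inn μ f g = conj' (inn μ g f) := by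
  unfold inn
  rw [conj'_def, ← integral_conj]
  congr 1
  funext t
  simp only [conj'_def, map_mul, Complex.conj_conj]
  ring

lemma mem_Lsp_of_le {w : ℕ → Polynomial ℂ}
    (hw0 : ∀ i t, onT t → (w i).eval t ≠ 0) (hw1 : ∀ i, (w i).natDegree ≤ 1)
    {φ : ℕ → ℂ → ℂ} {p : ℕ → Polynomial ℂ}
    (hrep : ∀ m t, φ m t = (p m).eval t / (∏ i ∈ Finset.Icc 1 m, w i).eval t)
    (hdeg : ∀ m, (p m).natDegree ≤ m)
    {a m : ℕ} (h : a ≤ m) :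
    φ a ∈ Lsp (fun k => ∏ i ∈ Finset.Icc 1 k, w i) m := by
  refine ⟨p a * ∏ i ∈ Finset.Ioc a m, w i, ?_, ?_⟩
  · refine le_trans (Polynomial.natDegree_mul_le) ?_
    have h2 := prod_w_natDegree hw1 (Finset.Ioc a m)
    rw [Nat.card_Ioc] at h2
    have := hdeg a
    omega
  · intro t ht
    rw [hrep a t]
    show _ = _ / (∏ i ∈ Finset.Icc 1 m, w i).eval t
    rw [prod_split w h, Polynomial.eval_mul, Polynomial.eval_mul]
    have hT : (∏ i ∈ Finset.Ioc a m, w i).eval t ≠ 0 :=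
      eval_prod_ne_zero_iff.mpr (fun i _ => hw0 i t ht)
    exact (mul_div_mul_right _ _ hT).symm

lemma inn_delta {μ : Measure ℂ} {w : ℕ → Polynomial ℂ}
    (hw0 : ∀ i t, onT t → (w i).eval t ≠ 0) (hw1 : ∀ i, (w i).natDegree ≤ 1)
    {φ : ℕ → ℂ → ℂ} {p : ℕ → Polynomial ℂ}
    (hO : IsORF μ (fun k => ∏ i ∈ Finset.Icc 1 k, w i) φ p) (j l : ℕ) :
    inn μ (φ j) (φ l) = if j = l then 1 else 0 := by
  have hrep : ∀ m t, φ m t = (p m).eval t / (∏ i ∈ Finset.Icc 1 m, w i).eval t := hO.rep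
  rcases lt_trichotomy j l with hlt | heq | hgt
  · rw [if_neg (Nat.ne_of_lt hlt), inn_conj]
    have h0 := hO.orth l (by omega) (φ j)
      (mem_Lsp_of_le hw0 hw1 hrep hO.deg (show j ≤ l - 1 by omega))
    rw [h0, conj'_zero]
  · rw [if_pos heq, heq]; exact hO.norm l
  · rw [if_neg (Nat.ne_of_gt hgt)]
    exact hO.orth j (by omega) (φ l)
      (mem_Lsp_of_le hw0 hw1 hrep hO.deg (show l ≤ j - 1 by omega))

section Core

variable {μ : Measure ℂ}

/-- integrability of rational integrands concentrated on the circle -/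
lemma integrable_ratio [IsFiniteMeasure μ] (hcirc : μ {z | ¬ onT z} = 0)
    (d : Polynomial ℂ) (hd : ∀ t, onT t → d.eval t ≠ 0) (p p' : Polynomial ℂ) :
    Integrable (fun t => conj' (p.eval t / d.eval t) * (p'.eval t / d.eval t)) μ := by
  have hmeas : Measurable (fun t => conj' (p.eval t / d.eval t) * (p'.eval t / d.eval t)) := by
    have h1 : Measurable (fun t : ℂ => p.eval t) := p.continuous_aeval.measurable
    have h2 : Measurable (fun t : ℂ => p'.eval t) := p'.continuous_aeval.measurable
    have h3 : Measurable (fun t : ℂ => d.eval t) := d.continuous_aeval.measurable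
    have hc : Measurable (fun z : ℂ => conj' z) := Complex.continuous_conj.measurable
    exact (hc.comp (h1.div h3)).mul (h2.div h3)
  -- compactness bounds
  have hS : IsCompact (Metric.sphere (0:ℂ) 1) := isCompact_sphere 0 1
  have honT : ∀ t : ℂ, t ∈ Metric.sphere (0:ℂ) 1 ↔ onT t := by
    intro t
    simp [Metric.mem_sphere, Complex.dist_eq, onT]
  have hne : (Metric.sphere (0:ℂ) 1).Nonempty := ⟨1, by simp⟩
  obtain ⟨t₁, ht₁, hMn⟩ := hS.exists_isMaxOn hne
    ((continuous_norm.comp p.continuous_aeval).mul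
      (continuous_norm.comp p'.continuous_aeval)).continuousOn
  obtain ⟨t₂, ht₂, hmin⟩ := hS.exists_isMinOn hne
    (continuous_norm.comp d.continuous_aeval).continuousOn
  set Mn := ‖p.eval t₁‖ * ‖p'.eval t₁‖ with hMndef
  set δ := ‖d.eval t₂‖ with hδdef
  have hδpos : 0 < δ := by
    have := hd t₂ ((honT t₂).mp ht₂)
    exact norm_pos_iff.mpr this
  refine (integrable_const (Mn / (δ * δ))).mono' hmeas.aestronglyMeasurable ?_
  rw [MeasureTheory.ae_iff]
  refine measure_mono_null ?_ hcirc
  intro t ht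
  simp only [Set.mem_setOf_eq] at ht ⊢
  intro honTt
  apply ht
  have htS : t ∈ Metric.sphere (0:ℂ) 1 := (honT t).mpr honTt
  have hb1 : ‖p.eval t‖ * ‖p'.eval t‖ ≤ Mn := hMn htS
  have hb2 : δ ≤ ‖d.eval t‖ := hmin htS
  have hdt : 0 < ‖d.eval t‖ := lt_of_lt_of_le hδpos hb2
  rw [norm_mul]
  simp only [conj'_div, norm_div, abs_conj']
  rw [div_mul_div_comm]
  refine div_le_div₀ (le_trans (mul_nonneg (norm_nonneg _) (norm_nonneg _)) hb1)
    hb1 (mul_pos hδpos hδpos) (mul_le_mul hb2 hb2 (le_of_lt hδpos) (le_of_lt hdt))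

end Core

section Core2

variable {μ : Measure ℂ}

theorem core [IsFiniteMeasure μ] (hcirc : μ {z | ¬ onT z} = 0)
    (n : ℕ) (d : Polynomial ℂ) (hd : ∀ t, onT t → d.eval t ≠ 0)
    (q r : Fin (n + 1) → Polynomial ℂ)
    (hqd : ∀ j, (q j).natDegree ≤ n) (hrd : ∀ k, (r k).natDegree ≤ n)
    (hq : ∀ j l, (∫ t, conj' ((q j).eval t / d.eval t) * ((q l).eval t / d.eval t) ∂μ)
        = if j = l then 1 else 0)
    (hr : ∀ k l, (∫ t, conj' ((r k).eval t / d.eval t) * ((r l).eval t / d.eval t) ∂μ)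
        = if k = l then 1 else 0)
    (z w : ℂ) :
    (∑ k : Fin (n + 1), (r k).eval z / d.eval z * conj' ((r k).eval w / d.eval w))
      = ∑ j : Fin (n + 1), (q j).eval z / d.eval z * conj' ((q j).eval w / d.eval w) := by
  classical
  set P : Polynomial ℂ → ℂ → ℂ := fun p t => p.eval t / d.eval t with hP
  have habs : ∀ p p' : Polynomial ℂ, Integrable (fun t => conj' (P p t) * P p' t) μ :=
    fun p p' => integrable_ratio hcirc d hd p p'
  -- pointwise linearity of P over finite sums
  have hPadd : ∀ (a : Fin (n + 1) → ℂ) (f : Fin (n + 1) → Polynomial ℂ) (t : ℂ),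
      P (∑ j, a j • f j) t = ∑ j, a j * P (f j) t := by
    intro a f t
    simp only [P, Polynomial.eval_finset_sum, Polynomial.eval_smul, smul_eq_mul,
      Finset.sum_div, mul_div_assoc]
  -- right linearity of the form
  have hPhiR : ∀ (p : Polynomial ℂ) (a : Fin (n + 1) → ℂ) (f : Fin (n + 1) → Polynomial ℂ),
      (∫ t, conj' (P p t) * P (∑ j, a j • f j) t ∂μ)
        = ∑ j, a j * ∫ t, conj' (P p t) * P (f j) t ∂μ := by
    intro p a f
    have e1 : (fun t => conj' (P p t) * P (∑ j, a j • f j) t)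
        = fun t => ∑ j, a j * (conj' (P p t) * P (f j) t) := by
      funext t
      rw [hPadd, Finset.mul_sum]
      exact Finset.sum_congr rfl fun j _ => by ring
    rw [e1, integral_finset_sum _ (fun j _ => (habs p (f j)).const_mul (a j))]
    exact Finset.sum_congr rfl fun j _ => integral_const_mul (a j) _
  -- left antilinearity of the form
  have hPhiL : ∀ (a : Fin (n + 1) → ℂ) (f : Fin (n + 1) → Polynomial ℂ) (p : Polynomial ℂ),
      (∫ t, conj' (P (∑ j, a j • f j) t) * P p t ∂μ)
        = ∑ j, conj' (a j) * ∫ t, conj' (P (f j) t) * P p t ∂μ := by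
    intro a f p
    have e1 : (fun t => conj' (P (∑ j, a j • f j) t) * P p t)
        = fun t => ∑ j, conj' (a j) * (conj' (P (f j) t) * P p t) := by
      funext t
      rw [hPadd, conj'_def, map_sum, Finset.sum_mul]
      exact Finset.sum_congr rfl fun j _ => by
        rw [map_mul, ← conj'_def, ← conj'_def]; ring
    rw [e1, integral_finset_sum _ (fun j _ => (habs (f j) p).const_mul (conj' (a j)))]
    exact Finset.sum_congr rfl fun j _ => integral_const_mul (conj' (a j)) _
  -- coefficient vectors
  set v : Fin (n + 1) → (Fin (n + 1) → ℂ) := fun j i => (q j).coeff i with hv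
  have hsumpoly : ∀ (g : Fin (n + 1) → ℂ) (f : Fin (n + 1) → Polynomial ℂ) (i : ℕ),
      (∑ j, g j • f j).coeff i = ∑ j, g j * (f j).coeff i := by
    intro g f i
    rw [Polynomial.finset_sum_coeff]
    exact Finset.sum_congr rfl fun j _ => by rw [Polynomial.coeff_smul, smul_eq_mul]
  have hli : LinearIndependent ℂ v := by
    rw [Fintype.linearIndependent_iff]
    intro g hg l
    have hpoly : (∑ j, g j • q j) = 0 := by
      apply Polynomial.ext
      intro i
      rw [hsumpoly, Polynomial.coeff_zero]
      by_cases hi : i ≤ n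
      · have := congrFun hg ⟨i, by omega⟩
        simpa [v] using this
      · refine Finset.sum_eq_zero fun j _ => ?_
        rw [Polynomial.coeff_eq_zero_of_natDegree_lt (lt_of_le_of_lt (hqd j) (by omega))]
        ring
    have h0 : (∫ t, conj' (P (q l) t) * P (∑ j, g j • q j) t ∂μ) = g l := by
      rw [hPhiR]
      simp only [P, hq]
      simp
    rw [hpoly] at h0
    rw [← h0]
    simp [P]
  have hcard : Fintype.card (Fin (n + 1)) = Module.finrank ℂ (Fin (n + 1) → ℂ) := by
    simp
  let bas : Module.Basis (Fin (n + 1)) ℂ (Fin (n + 1) → ℂ) :=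
    basisOfLinearIndependentOfCardEqFinrank hli hcard
  have hbas : ∀ j, bas j = v j := fun j => by
    rw [coe_basisOfLinearIndependentOfCardEqFinrank]
  set b : Fin (n + 1) → Fin (n + 1) → ℂ :=
    fun k j => bas.repr (fun i => (r k).coeff i) j with hb
  have hrq : ∀ k, r k = ∑ j, b k j • q j := by
    intro k
    have hv2 : (fun i : Fin (n + 1) => (r k).coeff ↑i) = ∑ j, b k j • v j := by
      conv_lhs => rw [← bas.sum_repr (fun i : Fin (n + 1) => (r k).coeff ↑i)]
      refine Finset.sum_congr rfl fun j _ => ?_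
      rw [hbas]
    apply Polynomial.ext
    intro i
    rw [hsumpoly]
    by_cases hi : i ≤ n
    · have := congrFun hv2 ⟨i, by omega⟩
      simp only [Finset.sum_apply, Pi.smul_apply, smul_eq_mul] at this
      exact this
    · rw [Polynomial.coeff_eq_zero_of_natDegree_lt (lt_of_le_of_lt (hrd k) (by omega))]
      refine (Finset.sum_eq_zero fun j _ => ?_).symm
      rw [Polynomial.coeff_eq_zero_of_natDegree_lt (lt_of_le_of_lt (hqd j) (by omega))]
      ring
  -- Gram of r in terms of b
  have hbb : ∀ k l, (∑ j, conj' (b k j) * b l j) = if k = l then 1 else 0 := by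
    intro k l
    have e1 : (∫ t, conj' (P (r k) t) * P (r l) t ∂μ) = ∑ j, conj' (b k j) * b l j := by
      conv_lhs => rw [hrq k, hrq l]
      rw [hPhiL]
      refine Finset.sum_congr rfl fun j _ => ?_
      rw [hPhiR]
      congr 1
      simp only [P, hq]
      simp
    rw [← e1]
    exact hr k l
  -- matrix manipulation
  set B : Matrix (Fin (n + 1)) (Fin (n + 1)) ℂ := Matrix.of b with hB
  have h1 : B * B.conjTranspose = 1 := by
    ext k l
    have e := congrArg conj' (hbb k l)
    rw [conj'_def, map_sum] at e
    rw [Matrix.mul_apply, Matrix.one_apply]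
    have e3 : (∑ j, B k j * B.conjTranspose j l)
        = ∑ j, (starRingEnd ℂ) (conj' (b k j) * b l j) := by
      refine Finset.sum_congr rfl fun j _ => ?_
      simp only [Matrix.conjTranspose_apply, Matrix.of_apply, B, conj'_def, map_mul,
        Complex.conj_conj, RingHom.coe_coe, Complex.star_def]
    rw [e3, e]
    split <;> simp [conj'_def]
  have h2 : B.conjTranspose * B = 1 := mul_eq_one_comm.mp h1
  have hS : ∀ j m, (∑ k, b k j * conj' (b k m)) = if j = m then 1 else 0 := by
    intro j m
    have e := congrArg conj' (congrFun (congrFun h2 j) m)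
    rw [conj'_def, Matrix.mul_apply, map_sum] at e
    have e3 : (∑ k, b k j * conj' (b k m))
        = ∑ k, (starRingEnd ℂ) (B.conjTranspose j k * B k m) := by
      refine Finset.sum_congr rfl fun k _ => ?_
      simp only [Matrix.conjTranspose_apply, Matrix.of_apply, B, conj'_def, map_mul,
        Complex.conj_conj, RingHom.coe_coe, Complex.star_def]
    rw [e3, e, Matrix.one_apply]
    split <;> simp [conj'_def]
  -- final computation
  have hPz : ∀ (k : Fin (n + 1)) (t : ℂ), P (r k) t = ∑ j, b k j * P (q j) t := by
    intro k t
    rw [hrq k]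
    exact hPadd _ _ t
  calc (∑ k : Fin (n + 1), P (r k) z * conj' (P (r k) w))
      = ∑ k : Fin (n + 1), ∑ j, ∑ m,
          (b k j * P (q j) z) * (conj' (b k m) * conj' (P (q m) w)) := by
        refine Finset.sum_congr rfl fun k _ => ?_
        rw [hPz k z, hPz k w, conj'_def, map_sum, Finset.sum_mul_sum]
        refine Finset.sum_congr rfl fun j _ => Finset.sum_congr rfl fun m _ => ?_
        rw [map_mul, ← conj'_def, ← conj'_def]
    _ = ∑ j, ∑ m, (∑ k, b k j * conj' (b k m)) * (P (q j) z * conj' (P (q m) w)) := by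
        rw [Finset.sum_comm]
        refine Finset.sum_congr rfl fun j _ => ?_
        rw [Finset.sum_comm]
        refine Finset.sum_congr rfl fun m _ => ?_
        rw [Finset.sum_mul]
        exact Finset.sum_congr rfl fun k _ => by ring
    _ = ∑ j : Fin (n + 1), P (q j) z * conj' (P (q j) w) := by
        refine Finset.sum_congr rfl fun j _ => ?_
        rw [Finset.sum_congr rfl fun m (_ : m ∈ Finset.univ) => by rw [hS j m]]
        simp

end Core2

section Side

/-- one side of the statement, abstractly -/
theorem side (μ : Measure ℂ) (hprob : IsProbabilityMeasure μ) (hcirc : μ {z | ¬ onT z} = 0)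
    (n : ℕ) (d : Polynomial ℂ) (hd : ∀ t, onT t → d.eval t ≠ 0)
    (φX φG : ℕ → ℂ → ℂ) (Bl : ℂ → ℂ)
    (q r : ℕ → Polynomial ℂ)
    (hqd : ∀ j ≤ n, (q j).natDegree ≤ n) (hrd : ∀ k ≤ n, (r k).natDegree ≤ n)
    (hinnX : ∀ j l, inn μ (φX j) (φX l) = if j = l then 1 else 0)
    (hinnG : ∀ k l, inn μ (φG k) (φG l) = if k = l then 1 else 0)
    (hBT : ∀ t, onT t → conj' (Bl t) * Bl t = 1)
    (z w : ℂ)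
    (hq3 : ∀ j ≤ n, ∀ t, (onT t ∨ t = z ∨ t = w) → (q j).eval t / d.eval t = φX j t * Bl t)
    (hr3 : ∀ k ≤ n, ∀ t, (onT t ∨ t = z ∨ t = w) → (r k).eval t / d.eval t = φG k t) :
    ker φX n z w * Bl z * conj' (Bl w) = ker φG n z w := by
  haveI := hprob
  haveI : IsFiniteMeasure μ := inferInstance
  have hq2 : ∀ j l : Fin (n + 1),
      (∫ t, conj' ((q j).eval t / d.eval t) * ((q l).eval t / d.eval t) ∂μ)
        = if j = l then 1 else 0 := by
    intro j l
    have hae : (fun t => conj' ((q j).eval t / d.eval t) * ((q l).eval t / d.eval t))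
        =ᵐ[μ] fun t => conj' (φX j t) * φX l t := by
      rw [Filter.eventuallyEq_iff_exists_mem]
      refine ⟨{t | onT t}, ?_, ?_⟩
      · rw [mem_ae_iff]
        rw [Set.compl_setOf]; exact hcirc
      · intro t ht
        simp only [Set.mem_setOf_eq] at ht
        dsimp only
        rw [hq3 j (by omega) t (Or.inl ht), hq3 l (by omega) t (Or.inl ht)]
        have := hBT t ht
        rw [conj'_def, map_mul, ← conj'_def, ← conj'_def]
        calc conj' (φX j t) * conj' (Bl t) * (φX l t * Bl t)
            = conj' (φX j t) * φX l t * (conj' (Bl t) * Bl t) := by ring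
        _ = conj' (φX j t) * φX l t := by rw [this, mul_one]
    rw [integral_congr_ae hae]
    have := hinnX j l
    unfold inn at this
    rw [this]
    by_cases h : (j : ℕ) = (l : ℕ)
    · rw [if_pos h, if_pos (Fin.ext h)]
    · rw [if_neg h, if_neg (fun hh => h (congrArg Fin.val hh))]
  have hr2 : ∀ k l : Fin (n + 1),
      (∫ t, conj' ((r k).eval t / d.eval t) * ((r l).eval t / d.eval t) ∂μ)
        = if k = l then 1 else 0 := by
    intro k l
    have hae : (fun t => conj' ((r k).eval t / d.eval t) * ((r l).eval t / d.eval t))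
        =ᵐ[μ] fun t => conj' (φG k t) * φG l t := by
      rw [Filter.eventuallyEq_iff_exists_mem]
      refine ⟨{t | onT t}, ?_, ?_⟩
      · rw [mem_ae_iff]
        rw [Set.compl_setOf]; exact hcirc
      · intro t ht
        simp only [Set.mem_setOf_eq] at ht
        dsimp only
        rw [hr3 k (by omega) t (Or.inl ht), hr3 l (by omega) t (Or.inl ht)]
    rw [integral_congr_ae hae]
    have := hinnG k l
    unfold inn at this
    rw [this]
    by_cases h : (k : ℕ) = (l : ℕ)
    · rw [if_pos h, if_pos (Fin.ext h)]
    · rw [if_neg h, if_neg (fun hh => h (congrArg Fin.val hh))]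
  have hcore := core hcirc n d hd (fun j : Fin (n + 1) => q j) (fun k : Fin (n + 1) => r k)
    (fun j => hqd j (by omega)) (fun k => hrd k (by omega)) hq2 hr2 z w
  -- rewrite both kernels
  have hker1 : ker φX n z w * Bl z * conj' (Bl w)
      = ∑ j : Fin (n + 1), (q (j : ℕ)).eval z / d.eval z * conj' ((q (j : ℕ)).eval w / d.eval w) := by
    unfold ker
    rw [Finset.sum_mul, Finset.sum_mul, ← Fin.sum_univ_eq_sum_range
      (fun k => φX k z * conj' (φX k w) * Bl z * conj' (Bl w)) (n + 1)]
    refine Finset.sum_congr rfl fun j _ => ?_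
    rw [hq3 j (by omega) z (Or.inr (Or.inl rfl)), hq3 j (by omega) w (Or.inr (Or.inr rfl))]
    simp only [conj'_def, map_mul]
    ring
  have hker2 : ker φG n z w
      = ∑ k : Fin (n + 1), (r (k : ℕ)).eval z / d.eval z * conj' ((r (k : ℕ)).eval w / d.eval w) := by
    unfold ker
    rw [← Fin.sum_univ_eq_sum_range (fun k => φG k z * conj' (φG k w)) (n + 1)]
    refine Finset.sum_congr rfl fun k _ => ?_
    rw [hr3 k (by omega) z (Or.inr (Or.inl rfl)), hr3 k (by omega) w (Or.inr (Or.inr rfl))]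
  rw [hker1, hker2, hcore]

end Side

section Pointwise

lemma G_point (α : ℕ → ℂ) (c : ℕ → Bool) {n k : ℕ} (hk : k ≤ n)
    {φG : ℕ → ℂ → ℂ} {pG : ℕ → Polynomial ℂ}
    (hrep : ∀ m t, φG m t = (pG m).eval t / (piG α c m).eval t)
    {z : ℂ} (hz : ∀ i ∈ Finset.Icc 1 n, (wG α c i).eval z ≠ 0) :
    (pG k * ∏ i ∈ Finset.Ioc k n, wG α c i).eval z / (piG α c n).eval z = φG k z := by
  rw [hrep k z]
  unfold piG
  rw [prod_split (wG α c) hk, Polynomial.eval_mul, Polynomial.eval_mul]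
  have hT : (∏ i ∈ Finset.Ioc k n, wG α c i).eval z ≠ 0 :=
    eval_prod_ne_zero_iff.mpr (fun i hi => hz i (by
      rw [Finset.mem_Ioc] at hi; rw [Finset.mem_Icc]; omega))
  exact mul_div_mul_right _ _ hT

lemma A_point (α : ℕ → ℂ) (c : ℕ → Bool) {n j : ℕ} (hj : j ≤ n)
    {φA : ℕ → ℂ → ℂ} {pA : ℕ → Polynomial ℂ}
    (hrep : ∀ m t, φA m t = (pA m).eval t / (piA α m).eval t)
    {z : ℂ} (hzA : ∀ i ∈ Finset.Icc 1 n, (wA α i).eval z ≠ 0)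
    (hzB : ∀ i ∈ Finset.Icc 1 n, (wB α i).eval z ≠ 0) :
    (Polynomial.C (∏ i ∈ bSet c n, cc α i)
        * (pA j * ∏ i ∈ Finset.Ioc j n, wA α i)).eval z / (piG α c n).eval z
      = φA j z * BcB α c n z := by
  have hsubA : ∀ i ∈ aSet c n, (wA α i).eval z ≠ 0 :=
    fun i hi => hzA i (Finset.mem_filter.mp hi).1
  have hsubBA : ∀ i ∈ bSet c n, (wA α i).eval z ≠ 0 :=
    fun i hi => hzA i (Finset.mem_filter.mp hi).1
  have hsubBB : ∀ i ∈ bSet c n, (wB α i).eval z ≠ 0 :=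
    fun i hi => hzB i (Finset.mem_filter.mp hi).1
  -- BcB as a ratio
  have hBcB : BcB α c n z = (∏ i ∈ bSet c n, cc α i)
      * ((∏ i ∈ bSet c n, (wA α i).eval z) / (∏ i ∈ bSet c n, (wB α i).eval z)) := by
    unfold BcB
    rw [← Finset.prod_div_distrib, ← Finset.prod_mul_distrib]
    refine Finset.prod_congr rfl fun i hi => ?_
    have hci : c i = false := (Finset.mem_filter.mp hi).2
    unfold zetaG
    rw [hci]
    simp only [Bool.false_eq_true, if_false]
    exact zetaB_eq α i z (hsubBB i hi)
  rw [hBcB, hrep j z]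
  -- numerators and denominators
  have hsplit : (piA α n).eval z = (piA α j).eval z * (∏ i ∈ Finset.Ioc j n, wA α i).eval z := by
    unfold piA
    rw [prod_split (wA α) hj, Polynomial.eval_mul]
  have hfilter : (piA α n).eval z
      = (∏ i ∈ aSet c n, (wA α i).eval z) * (∏ i ∈ bSet c n, (wA α i).eval z) := by
    rw [piA_filter_split α c n, Polynomial.eval_mul, Polynomial.eval_prod, Polynomial.eval_prod]
  have hpiG : (piG α c n).eval z
      = (∏ i ∈ aSet c n, (wA α i).eval z) * (∏ i ∈ bSet c n, (wB α i).eval z) := by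
    rw [piG_split α c n, Polynomial.eval_mul, Polynomial.eval_prod, Polynomial.eval_prod]
  have hPj : (piA α j).eval z ≠ 0 := by
    unfold piA
    refine eval_prod_ne_zero_iff.mpr (fun i hi => hzA i ?_)
    rw [Finset.mem_Icc] at hi ⊢; omega
  have hT : (∏ i ∈ Finset.Ioc j n, wA α i).eval z ≠ 0 := by
    refine eval_prod_ne_zero_iff.mpr (fun i hi => hzA i ?_)
    rw [Finset.mem_Ioc] at hi; rw [Finset.mem_Icc]; omega
  have hEA : (∏ i ∈ aSet c n, (wA α i).eval z) ≠ 0 :=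
    Finset.prod_ne_zero_iff.mpr hsubA
  have hFA : (∏ i ∈ bSet c n, (wA α i).eval z) ≠ 0 :=
    Finset.prod_ne_zero_iff.mpr hsubBA
  have hFB : (∏ i ∈ bSet c n, (wB α i).eval z) ≠ 0 :=
    Finset.prod_ne_zero_iff.mpr hsubBB
  have key : (piA α j).eval z * (∏ i ∈ Finset.Ioc j n, wA α i).eval z
      = (∏ i ∈ aSet c n, (wA α i).eval z) * (∏ i ∈ bSet c n, (wA α i).eval z) := by
    rw [← hsplit, ← hfilter]
  rw [Polynomial.eval_mul, Polynomial.eval_C, Polynomial.eval_mul, hpiG]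
  field_simp
  ring_nf
  ring_nf at key
  linear_combination ((∏ i ∈ bSet c n, cc α i) * (pA j).eval z) * key

lemma B_point (α : ℕ → ℂ) (c : ℕ → Bool) {n j : ℕ} (hj : j ≤ n)
    {φB : ℕ → ℂ → ℂ} {pB : ℕ → Polynomial ℂ}
    (hrep : ∀ m t, φB m t = (pB m).eval t / (piB α m).eval t)
    {z : ℂ} (hzA : ∀ i ∈ Finset.Icc 1 n, (wA α i).eval z ≠ 0)
    (hzB : ∀ i ∈ Finset.Icc 1 n, (wB α i).eval z ≠ 0) :
    (Polynomial.C (∏ i ∈ aSet c n, cc α i)⁻¹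
        * (pB j * ∏ i ∈ Finset.Ioc j n, wB α i)).eval z / (piG α c n).eval z
      = φB j z * BcA α c n z := by
  have hsubA : ∀ i ∈ aSet c n, (wA α i).eval z ≠ 0 :=
    fun i hi => hzA i (Finset.mem_filter.mp hi).1
  have hsubAB : ∀ i ∈ aSet c n, (wB α i).eval z ≠ 0 :=
    fun i hi => hzB i (Finset.mem_filter.mp hi).1
  have hsubBB : ∀ i ∈ bSet c n, (wB α i).eval z ≠ 0 :=
    fun i hi => hzB i (Finset.mem_filter.mp hi).1
  have hBcA : BcA α c n z = (∏ i ∈ aSet c n, cc α i)⁻¹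
      * ((∏ i ∈ aSet c n, (wB α i).eval z) / (∏ i ∈ aSet c n, (wA α i).eval z)) := by
    unfold BcA
    have e1 : ∀ i ∈ aSet c n, zetaG α c i z = (cc α i)⁻¹ * ((wB α i).eval z / (wA α i).eval z) := by
      intro i hi
      have hci : c i = true := (Finset.mem_filter.mp hi).2
      unfold zetaG
      rw [if_pos hci]
      exact zetaA_eq α i z (hsubA i hi)
    rw [Finset.prod_congr rfl e1, Finset.prod_mul_distrib, Finset.prod_div_distrib,
      Finset.prod_inv_distrib]
  rw [hBcA, hrep j z]
  have hsplit : (piB α n).eval z = (piB α j).eval z * (∏ i ∈ Finset.Ioc j n, wB α i).eval z := by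
    unfold piB
    rw [prod_split (wB α) hj, Polynomial.eval_mul]
  have hfilter : (piB α n).eval z
      = (∏ i ∈ aSet c n, (wB α i).eval z) * (∏ i ∈ bSet c n, (wB α i).eval z) := by
    rw [piB_filter_split α c n, Polynomial.eval_mul, Polynomial.eval_prod, Polynomial.eval_prod]
  have hpiG : (piG α c n).eval z
      = (∏ i ∈ aSet c n, (wA α i).eval z) * (∏ i ∈ bSet c n, (wB α i).eval z) := by
    rw [piG_split α c n, Polynomial.eval_mul, Polynomial.eval_prod, Polynomial.eval_prod]
  have hPj : (piB α j).eval z ≠ 0 := by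
    unfold piB
    refine eval_prod_ne_zero_iff.mpr (fun i hi => hzB i ?_)
    rw [Finset.mem_Icc] at hi ⊢; omega
  have hT : (∏ i ∈ Finset.Ioc j n, wB α i).eval z ≠ 0 := by
    refine eval_prod_ne_zero_iff.mpr (fun i hi => hzB i ?_)
    rw [Finset.mem_Ioc] at hi; rw [Finset.mem_Icc]; omega
  have hEA : (∏ i ∈ aSet c n, (wA α i).eval z) ≠ 0 :=
    Finset.prod_ne_zero_iff.mpr hsubA
  have hEB : (∏ i ∈ aSet c n, (wB α i).eval z) ≠ 0 :=
    Finset.prod_ne_zero_iff.mpr hsubAB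
  have hFB : (∏ i ∈ bSet c n, (wB α i).eval z) ≠ 0 :=
    Finset.prod_ne_zero_iff.mpr hsubBB
  have hcc : (∏ i ∈ aSet c n, cc α i) ≠ 0 :=
    Finset.prod_ne_zero_iff.mpr (fun i _ => cc_ne_zero α i)
  have key : (piB α j).eval z * (∏ i ∈ Finset.Ioc j n, wB α i).eval z
      = (∏ i ∈ aSet c n, (wB α i).eval z) * (∏ i ∈ bSet c n, (wB α i).eval z) := by
    rw [← hsplit, ← hfilter]
  rw [Polynomial.eval_mul, Polynomial.eval_C, Polynomial.eval_mul, hpiG]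
  field_simp
  ring_nf
  ring_nf at key
  linear_combination ((pB j).eval z) * key

end Pointwise

end ORFAux


open ORF MeasureTheory

/-- for all z, w off the unit circle and away from the poles,
k_n^α(z,w)·B̌_n^β(z)·conj(B̌_n^β(w)) = k_n(z,w) = k_n^β(z,w)·B̌_n^α(z)·conj(B̌_n^α(w)). -/
theorem stmt8 (α : ℕ → ℂ) (hα0 : α 0 = 0) (hα : ∀ j, ‖α j‖ < 1)
    (c : ℕ → Bool) (μ : Measure ℂ) (hμ : CircleMeasure μ)
    (φA φB φG : ℕ → ℂ → ℂ) (pA pB pG : ℕ → Polynomial ℂ)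
    (hA : IsORF μ (piA α) φA pA) (hB : IsORF μ (piB α) φB pB)
    (hG : IsORF μ (piG α c) φG pG)
    (hnA : ∀ n, normA α pA n) (hnB : ∀ n, normB α pB n) (hnG : ∀ n, normG α c pG n)
    (n : ℕ) (z w : ℂ)
    (hz : ¬ onT z) (hw : ¬ onT w) (hz0 : z ≠ 0) (hw0 : w ≠ 0)
    (hzA : (piA α n).eval z ≠ 0) (hwA : (piA α n).eval w ≠ 0)
    (hzB : (piB α n).eval z ≠ 0) (hwB : (piB α n).eval w ≠ 0)
    (hzG : (piG α c n).eval z ≠ 0) (hwG : (piG α c n).eval w ≠ 0) :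
    ker φA n z w * BcB α c n z * conj' (BcB α c n w) = ker φG n z w ∧
    ker φG n z w = ker φB n z w * BcA α c n z * conj' (BcA α c n w) := by
  classical
  -- nonvanishing of the elementary factors on the circle
  have hwAT : ∀ (i : ℕ) (t : ℂ), onT t → (wA α i).eval t ≠ 0 :=
    fun i t ht => ORFAux.wA_eval_ne (hα i) (le_of_eq ht)
  have hwBT : ∀ (i : ℕ) (t : ℂ), onT t → (wB α i).eval t ≠ 0 :=
    fun i t ht => ORFAux.wB_eval_ne_onT (hα i) ht
  have hwGT : ∀ (i : ℕ) (t : ℂ), onT t → (wG α c i).eval t ≠ 0 :=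
    fun i t ht => ORFAux.wG_eval_ne_onT c (hα i) ht
  have hdT : ∀ t, onT t → (piG α c n).eval t ≠ 0 := by
    intro t ht
    unfold piG
    exact ORFAux.eval_prod_ne_zero_iff.mpr (fun i _ => hwGT i t ht)
  -- nonvanishing of factors at z and w
  have hzA' : ∀ i ∈ Finset.Icc 1 n, (wA α i).eval z ≠ 0 := by
    unfold piA at hzA; exact ORFAux.eval_prod_ne_zero_iff.mp hzA
  have hwA' : ∀ i ∈ Finset.Icc 1 n, (wA α i).eval w ≠ 0 := by
    unfold piA at hwA; exact ORFAux.eval_prod_ne_zero_iff.mp hwA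
  have hzB' : ∀ i ∈ Finset.Icc 1 n, (wB α i).eval z ≠ 0 := by
    unfold piB at hzB; exact ORFAux.eval_prod_ne_zero_iff.mp hzB
  have hwB' : ∀ i ∈ Finset.Icc 1 n, (wB α i).eval w ≠ 0 := by
    unfold piB at hwB; exact ORFAux.eval_prod_ne_zero_iff.mp hwB
  have hzG' : ∀ i ∈ Finset.Icc 1 n, (wG α c i).eval z ≠ 0 := by
    unfold piG at hzG; exact ORFAux.eval_prod_ne_zero_iff.mp hzG
  have hwG' : ∀ i ∈ Finset.Icc 1 n, (wG α c i).eval w ≠ 0 := by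
    unfold piG at hwG; exact ORFAux.eval_prod_ne_zero_iff.mp hwG
  have hTA : ∀ t, onT t → ∀ i ∈ Finset.Icc 1 n, (wA α i).eval t ≠ 0 :=
    fun t ht i _ => hwAT i t ht
  have hTB : ∀ t, onT t → ∀ i ∈ Finset.Icc 1 n, (wB α i).eval t ≠ 0 :=
    fun t ht i _ => hwBT i t ht
  have hTG : ∀ t, onT t → ∀ i ∈ Finset.Icc 1 n, (wG α c i).eval t ≠ 0 :=
    fun t ht i _ => hwGT i t ht
  -- orthonormality of the three systems
  have hinnA : ∀ j l, inn μ (φA j) (φA l) = if j = l then 1 else 0 :=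
    fun j l => ORFAux.inn_delta hwAT (ORFAux.wA_natDegree α) hA j l
  have hinnB : ∀ j l, inn μ (φB j) (φB l) = if j = l then 1 else 0 :=
    fun j l => ORFAux.inn_delta hwBT (ORFAux.wB_natDegree α) hB j l
  have hinnG : ∀ j l, inn μ (φG j) (φG l) = if j = l then 1 else 0 :=
    fun j l => ORFAux.inn_delta hwGT (ORFAux.wG_natDegree α c) hG j l
  -- degree bounds for the numerators
  have hrd : ∀ k ≤ n, (pG k * ∏ i ∈ Finset.Ioc k n, wG α c i).natDegree ≤ n := by
    intro k hk
    refine le_trans Polynomial.natDegree_mul_le ?_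
    have h1 := hG.deg k
    have h2 := ORFAux.prod_w_natDegree (ORFAux.wG_natDegree α c) (Finset.Ioc k n)
    rw [Nat.card_Ioc] at h2
    omega
  have hqdA : ∀ j ≤ n, (Polynomial.C (∏ i ∈ bSet c n, ORFAux.cc α i)
      * (pA j * ∏ i ∈ Finset.Ioc j n, wA α i)).natDegree ≤ n := by
    intro j hj
    refine le_trans (Polynomial.natDegree_C_mul_le _ _) ?_
    refine le_trans Polynomial.natDegree_mul_le ?_
    have h1 := hA.deg j
    have h2 := ORFAux.prod_w_natDegree (ORFAux.wA_natDegree α) (Finset.Ioc j n)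
    rw [Nat.card_Ioc] at h2
    omega
  have hqdB : ∀ j ≤ n, (Polynomial.C (∏ i ∈ aSet c n, ORFAux.cc α i)⁻¹
      * (pB j * ∏ i ∈ Finset.Ioc j n, wB α i)).natDegree ≤ n := by
    intro j hj
    refine le_trans (Polynomial.natDegree_C_mul_le _ _) ?_
    refine le_trans Polynomial.natDegree_mul_le ?_
    have h1 := hB.deg j
    have h2 := ORFAux.prod_w_natDegree (ORFAux.wB_natDegree α) (Finset.Ioc j n)
    rw [Nat.card_Ioc] at h2
    omega
  -- the γ-numerators represent φG on the circle and at z, w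
  have hr3 : ∀ k ≤ n, ∀ t, (onT t ∨ t = z ∨ t = w) →
      (pG k * ∏ i ∈ Finset.Ioc k n, wG α c i).eval t / (piG α c n).eval t = φG k t := by
    intro k hk t hcase
    rcases hcase with ht | rfl | rfl
    · exact ORFAux.G_point α c hk hG.rep (hTG t ht)
    · exact ORFAux.G_point α c hk hG.rep hzG'
    · exact ORFAux.G_point α c hk hG.rep hwG'
  have hq3A : ∀ j ≤ n, ∀ t, (onT t ∨ t = z ∨ t = w) →
      (Polynomial.C (∏ i ∈ bSet c n, ORFAux.cc α i)
        * (pA j * ∏ i ∈ Finset.Ioc j n, wA α i)).eval t / (piG α c n).eval t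
        = φA j t * BcB α c n t := by
    intro j hj t hcase
    rcases hcase with ht | rfl | rfl
    · exact ORFAux.A_point α c hj hA.rep (hTA t ht) (hTB t ht)
    · exact ORFAux.A_point α c hj hA.rep hzA' hzB'
    · exact ORFAux.A_point α c hj hA.rep hwA' hwB'
  have hq3B : ∀ j ≤ n, ∀ t, (onT t ∨ t = z ∨ t = w) →
      (Polynomial.C (∏ i ∈ aSet c n, ORFAux.cc α i)⁻¹
        * (pB j * ∏ i ∈ Finset.Ioc j n, wB α i)).eval t / (piG α c n).eval t
        = φB j t * BcA α c n t := by
    intro j hj t hcase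
    rcases hcase with ht | rfl | rfl
    · exact ORFAux.B_point α c hj hB.rep (hTA t ht) (hTB t ht)
    · exact ORFAux.B_point α c hj hB.rep hzA' hzB'
    · exact ORFAux.B_point α c hj hB.rep hwA' hwB'
  have hBTb : ∀ t, onT t → conj' (BcB α c n t) * BcB α c n t = 1 :=
    fun t ht => ORFAux.conj_mul_self_of_abs_one (ORFAux.abs_BcB_onT α c n hα ht)
  have hBTa : ∀ t, onT t → conj' (BcA α c n t) * BcA α c n t = 1 :=
    fun t ht => ORFAux.conj_mul_self_of_abs_one (ORFAux.abs_BcA_onT α c n hα ht)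
  constructor
  · exact ORFAux.side μ hμ.prob hμ.circ n (piG α c n) hdT φA φG (BcB α c n)
      (fun j => Polynomial.C (∏ i ∈ bSet c n, ORFAux.cc α i)
        * (pA j * ∏ i ∈ Finset.Ioc j n, wA α i))
      (fun k => pG k * ∏ i ∈ Finset.Ioc k n, wG α c i)
      hqdA hrd hinnA hinnG hBTb z w hq3A hr3
  · exact (ORFAux.side μ hμ.prob hμ.circ n (piG α c n) hdT φB φG (BcA α c n)
      (fun j => Polynomial.C (∏ i ∈ aSet c n, ORFAux.cc α i)⁻¹
        * (pB j * ∏ i ∈ Finset.Ioc j n, wB α i))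
      (fun k => pG k * ∏ i ∈ Finset.Ioc k n, wG α c i)
      hqdB hrd hinnB hinnG hBTa z w hq3B hr3).symm
end
end

section
/- Define L_{n*}^ν = {f_* : f ∈ L_n^ν} and R_n^ν = L_n^ν · L_{n*}^ν = {g·h : g ∈ L_n^ν, h ∈ L_{n*}^ν} for ν ∈ {α, β, γ}. Then for every n ≥ 0, R_n^γ = R_n^α = R_n^β. -/
noncomputable section
open MeasureTheory
open scoped Classical

open ORF

lemma onT_mul_conj {z : ℂ} (hz : onT z) : z * conj' z = 1 := by
  rw [conj', Complex.mul_conj, Complex.normSq_eq_norm_sq, hz]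
  norm_num

/-- membership in `Rset` via a single fraction -/
lemma mem_Rset_iff (pip : ℕ → Polynomial ℂ) (n : ℕ) (h : ℂ → ℂ) :
    h ∈ Rset pip n ↔ ∃ p q : Polynomial ℂ, p.natDegree ≤ n ∧ q.natDegree ≤ n ∧
      ∀ z, onT z → h z = p.eval z * conj' (q.eval z) /
        ((pip n).eval z * conj' ((pip n).eval z)) := by
  constructor
  · rintro ⟨g, ⟨p, hp, hg⟩, k, ⟨q, hq, hk⟩, hprod⟩
    refine ⟨p, q, hp, hq, fun z hz => ?_⟩
    rw [hprod z hz, hg z hz, hk z hz]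
    simp only [conj', map_div₀, div_mul_div_comm]
  · rintro ⟨p, q, hp, hq, hval⟩
    refine ⟨fun z => p.eval z / (pip n).eval z, ⟨p, hp, fun z _ => rfl⟩,
      fun z => conj' (q.eval z / (pip n).eval z), ⟨q, hq, fun z _ => rfl⟩,
      fun z hz => ?_⟩
    rw [hval z hz]
    simp only [conj', map_div₀, div_mul_div_comm]

lemma Rset_subset {pip1 pip2 : ℕ → Polynomial ℂ} {n : ℕ} {C : ℂ}
    (h : ∀ z, onT z → (pip1 n).eval z * conj' ((pip1 n).eval z)
      = C * ((pip2 n).eval z * conj' ((pip2 n).eval z))) :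
    Rset pip1 n ⊆ Rset pip2 n := by
  intro f hf
  rw [mem_Rset_iff] at hf ⊢
  obtain ⟨p, q, hp, hq, hval⟩ := hf
  refine ⟨C⁻¹ • p, q, le_trans (Polynomial.natDegree_smul_le _ _) hp, hq, fun z hz => ?_⟩
  rw [hval z hz, h z hz, Polynomial.eval_smul, smul_eq_mul]
  ring

lemma Rset_congr {pip1 pip2 : ℕ → Polynomial ℂ} {n : ℕ} {C : ℂ} (hC : C ≠ 0)
    (h : ∀ z, onT z → (pip1 n).eval z * conj' ((pip1 n).eval z)
      = C * ((pip2 n).eval z * conj' ((pip2 n).eval z))) :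
    Rset pip1 n = Rset pip2 n := by
  refine le_antisymm (Rset_subset h) (Rset_subset (C := C⁻¹) fun z hz => ?_)
  rw [h z hz]
  field_simp

lemma factor_rel (α : ℕ → ℂ) (c : ℕ → Bool) (j : ℕ) (z : ℂ) (hz : z * conj' z = 1) :
    (wG α c j).eval z * conj' ((wG α c j).eval z)
      = (if c j = true ∨ α j = 0 then 1 else (α j * conj' (α j))⁻¹) *
        ((wA α j).eval z * conj' ((wA α j).eval z)) := by
  simp only [conj'] at hz ⊢
  by_cases hc : c j
  · simp [wG, hc]
  · by_cases h0 : α j = 0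
    · rw [wG, if_neg hc, wB, if_pos h0, if_pos (Or.inr h0)]
      simp [wA, h0, hz, conj']
    · have h0' : (starRingEnd ℂ) (α j) ≠ 0 := by
        simp only [ne_eq, map_eq_zero]; exact h0
      rw [wG, if_neg hc, wB, if_neg h0,
        if_neg (by simp [hc, h0] : ¬(c j = true ∨ α j = 0))]
      simp only [wA, conj', Complex.conj_conj, map_sub, map_one, map_mul, map_inv₀,
        Polynomial.eval_sub, Polynomial.eval_one, Polynomial.eval_mul, Polynomial.eval_C,
        Polynomial.eval_X]
      field_simp
      linear_combination (1 - α j * (starRingEnd ℂ) (α j)) * hz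

lemma piG_rel (α : ℕ → ℂ) (c : ℕ → Bool) (n : ℕ) :
    ∃ C : ℂ, C ≠ 0 ∧ ∀ z, onT z →
      (piG α c n).eval z * conj' ((piG α c n).eval z)
        = C * ((piA α n).eval z * conj' ((piA α n).eval z)) := by
  refine ⟨∏ j ∈ Finset.Icc 1 n,
      (if c j = true ∨ α j = 0 then 1 else (α j * conj' (α j))⁻¹), ?_, fun z hz => ?_⟩
  · rw [Finset.prod_ne_zero_iff]
    intro j _
    split
    · exact one_ne_zero
    · rename_i h
      push_neg at h
      refine inv_ne_zero (mul_ne_zero h.2 ?_)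
      simp only [conj', ne_eq, map_eq_zero]; exact h.2
  · have hz' := onT_mul_conj hz
    simp only [piG, piA, Polynomial.eval_prod, conj', map_prod, ← Finset.prod_mul_distrib]
    exact Finset.prod_congr rfl fun j _ => factor_rel α c j z hz'

lemma piB_eq (α : ℕ → ℂ) : piB α = piG α (fun _ => false) := by
  funext n
  simp [piB, piG, wG]

/-- with L_{n*}^ν = {f_* : f ∈ L_n^ν} and R_n^ν = L_n^ν·L_{n*}^ν,
for every n ≥ 0, R_n^γ = R_n^α = R_n^β. -/
theorem stmt15 (α : ℕ → ℂ) (hα0 : α 0 = 0) (hα : ∀ j, ‖α j‖ < 1)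
    (c : ℕ → Bool) (n : ℕ) :
    Rset (piG α c) n = Rset (piA α) n ∧ Rset (piG α c) n = Rset (piB α) n := by
  obtain ⟨C, hC, hrel⟩ := piG_rel α c n
  have h1 : Rset (piG α c) n = Rset (piA α) n := Rset_congr hC hrel
  obtain ⟨C', hC', hrel'⟩ := piG_rel α (fun _ => false) n
  have h2 : Rset (piB α) n = Rset (piA α) n := by
    rw [piB_eq α]
    exact Rset_congr hC' hrel'
  exact ⟨h1, h1.trans h2.symm⟩
end
end

section
/- Let π be an arbitrary permutation of (1, …, n), let M_π = ∏_{i∈π} G_i with each G_i a G-matrix of size (n+1)×(n+1), and let A and D be arbitrary diagonal (n+1)×(n+1) complex matrices. Then the determinant det(A·M_π + D), and hence also the characteristic polynomial and the eigenvalues of the AMPD matrix A·M_π + D, do not depend on the permutation π. -/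
noncomputable section

open Matrix Polynomial

set_option linter.unusedSectionVars false

/-- A G-matrix of size (n+1)×(n+1) with block index k (0-based rows/columns k, k+1):
it equals the identity matrix outside of the 2×2 submatrix in rows and columns k, k+1. -/
def IsGMat {n : ℕ} (k : Fin n) (G : Matrix (Fin (n + 1)) (Fin (n + 1)) ℂ) : Prop :=
  ∀ i j : Fin (n + 1),
    ¬((i = k.castSucc ∨ i = k.succ) ∧ (j = k.castSucc ∨ j = k.succ)) →
    G i j = if i = j then 1 else 0

/-- M_π = G_{π(1)}·G_{π(2)}·⋯·G_{π(n)}, the product taken from left to right in the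
order prescribed by the permutation π. -/
def Mperm {n : ℕ} (G : Fin n → Matrix (Fin (n + 1)) (Fin (n + 1)) ℂ)
    (π : Equiv.Perm (Fin n)) : Matrix (Fin (n + 1)) (Fin (n + 1)) ℂ :=
  (List.ofFn (fun i : Fin n => G (π i))).prod

/-- the n×(n+1) projection matrix P = [I_n 0] deleting the last coordinate -/
def Pproj (n : ℕ) : Matrix (Fin n) (Fin (n + 1)) ℂ :=
  Matrix.of fun i j => if (j : ℕ) = (i : ℕ) then 1 else 0


namespace Stmt18Aux

variable {κ κ₁ κ₂ κ₃ : Type*} [Fintype κ] [DecidableEq κ] [Fintype κ₁] [Fintype κ₂] [Fintype κ₃]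
  [DecidableEq κ₁] [DecidableEq κ₂] [DecidableEq κ₃]

lemma vecMulVec_mul (u : κ₁ → ℂ) (v : κ₂ → ℂ) (M : Matrix κ₂ κ₃ ℂ) :
    vecMulVec u v * M = vecMulVec u (Matrix.vecMul v M) := by
  ext i j
  simp only [mul_apply, vecMulVec_apply, Matrix.vecMul, dotProduct, Finset.mul_sum, mul_assoc]

lemma mul_vecMulVec (M : Matrix κ₁ κ₂ ℂ) (u : κ₂ → ℂ) (v : κ₃ → ℂ) :
    M * vecMulVec u v = vecMulVec (M *ᵥ u) v := by
  ext i j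
  simp only [mul_apply, vecMulVec_apply, Matrix.mulVec, dotProduct, Finset.sum_mul, mul_assoc]

lemma vecMulVec_mul_vecMulVec (u : κ₁ → ℂ) (v x : κ₂ → ℂ) (y : κ₃ → ℂ) :
    vecMulVec u v * vecMulVec x y = (v ⬝ᵥ x) • vecMulVec u y := by
  ext i j
  simp only [mul_apply, vecMulVec_apply, Matrix.smul_apply, dotProduct, Finset.sum_mul, smul_eq_mul,
    Finset.mul_sum]
  apply Finset.sum_congr rfl
  intro k _
  ring

lemma isDiag_mul_apply {M : Matrix κ κ ℂ} (hM : M.IsDiag) (X : Matrix κ κ₁ ℂ) (i : κ) (j : κ₁) :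
    (M * X) i j = M i i * X i j := by
  rw [mul_apply, Finset.sum_eq_single i]
  · intro k _ hk
    rw [hM (Ne.symm hk), zero_mul]
  · intro h; exact absurd (Finset.mem_univ i) h

lemma isDiag_mul_vecMulVec {M : Matrix κ κ ℂ} (hM : M.IsDiag) (u : κ → ℂ) (v : κ₁ → ℂ) :
    M * vecMulVec u v = vecMulVec (fun i => M i i * u i) v := by
  ext i j
  rw [isDiag_mul_apply hM]
  simp [vecMulVec_apply, mul_assoc]

lemma isDiag_mulVec_single {M : Matrix κ κ ℂ} (hM : M.IsDiag) (t : κ) :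
    M *ᵥ Pi.single t (1 : ℂ) = Pi.single t (M t t) := by
  ext i
  rw [Matrix.mulVec_single]
  rcases eq_or_ne i t with rfl | h
  · simp
  · simp [hM h, Pi.single_eq_of_ne h]

lemma isDiag_single_vecMul {M : Matrix κ κ ℂ} (hM : M.IsDiag) (t : κ) :
    Matrix.vecMul (Pi.single t (1 : ℂ)) M = Pi.single t (M t t) := by
  ext j
  rw [Matrix.single_vecMul]
  rcases eq_or_ne t j with rfl | h
  · simp
  · simp [hM h, Pi.single_eq_of_ne (Ne.symm h)]

lemma smul_vecMulVec (c : ℂ) (u : κ₁ → ℂ) (v : κ₂ → ℂ) :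
    vecMulVec (c • u) v = c • vecMulVec u v := by
  ext i j; simp [vecMulVec_apply, mul_assoc]

lemma vecMulVec_smul (c : ℂ) (u : κ₁ → ℂ) (v : κ₂ → ℂ) :
    vecMulVec u (c • v) = c • vecMulVec u v := by
  ext i j; simp [vecMulVec_apply]; ring

/-- The key commutation trick: `det (XY + c•1) = det (YX + c•1)` for a scalar `c`. -/
lemma det_mul_add_smul_one (X Y : Matrix κ κ ℂ) (c : ℂ) :
    det (X * Y + c • 1) = det (Y * X + c • 1) := by
  rcases eq_or_ne c 0 with rfl | hc
  · simp [det_mul, mul_comm]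
  · have h1 : X * Y + c • 1 = c • (1 + (c⁻¹ • X) * Y) := by
      rw [smul_add, smul_mul_assoc, smul_smul, mul_inv_cancel₀ hc, one_smul, add_comm]
    have h2 : Y * X + c • 1 = c • (1 + Y * (c⁻¹ • X)) := by
      rw [smul_add, mul_smul_comm, smul_smul, mul_inv_cancel₀ hc, one_smul, add_comm]
    rw [h1, h2, det_smul, det_smul, det_one_add_mul_comm]

section SOnPart

variable {N : ℕ}

/-- `M` agrees with the identity outside the block `s × s` (indices read as naturals). -/
def SOn (s : Set ℕ) (M : Matrix (Fin N) (Fin N) ℂ) : Prop :=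
  ∀ i j : Fin N, ¬((i : ℕ) ∈ s ∧ (j : ℕ) ∈ s) → M i j = if i = j then 1 else 0

lemma SOn.mono {s t : Set ℕ} {M : Matrix (Fin N) (Fin N) ℂ} (hst : s ⊆ t) (h : SOn s M) :
    SOn t M := fun i j hij => h i j (fun ⟨h1, h2⟩ => hij ⟨hst h1, hst h2⟩)

lemma SOn.one (s : Set ℕ) : SOn s (1 : Matrix (Fin N) (Fin N) ℂ) := by
  intro i j _
  rw [Matrix.one_apply]

lemma SOn.mul {s : Set ℕ} {M P : Matrix (Fin N) (Fin N) ℂ} (hM : SOn s M) (hP : SOn s P) :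
    SOn s (M * P) := by
  intro i j hij
  rcases not_and_or.mp hij with hi | hj
  · have hrow : ∀ k, M i k = if i = k then 1 else 0 := fun k => hM i k (fun ⟨h1, _⟩ => hi h1)
    have : (M * P) i j = P i j := by
      rw [Matrix.mul_apply]
      rw [Finset.sum_congr rfl (fun k _ => by rw [hrow k])]
      simp
    rw [this]
    exact hP i j (fun ⟨h1, _⟩ => hi h1)
  · have hcol : ∀ k, P k j = if k = j then 1 else 0 := fun k => hP k j (fun ⟨_, h2⟩ => hj h2)
    have : (M * P) i j = M i j := by
      rw [Matrix.mul_apply]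
      rw [Finset.sum_congr rfl (fun k _ => by rw [hcol k])]
      simp
    rw [this]
    exact hM i j (fun ⟨_, h2⟩ => hj h2)

lemma SOn.sub_one_eq_zero {s : Set ℕ} {M : Matrix (Fin N) (Fin N) ℂ} (hM : SOn s M)
    {i j : Fin N} (hij : ¬((i : ℕ) ∈ s ∧ (j : ℕ) ∈ s)) : (M - 1) i j = 0 := by
  rw [Matrix.sub_apply, hM i j hij, Matrix.one_apply, sub_self]

/-- Matrices supported on disjoint blocks commute. -/
lemma SOn.comm {s t : Set ℕ} {M P : Matrix (Fin N) (Fin N) ℂ} (hM : SOn s M) (hP : SOn t P)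
    (hdisj : ∀ a : ℕ, a ∈ s → a ∈ t → False) : M * P = P * M := by
  have hMP : (M - 1) * (P - 1) = 0 := by
    ext i j
    rw [Matrix.mul_apply, Matrix.zero_apply]
    apply Finset.sum_eq_zero
    intro k _
    by_cases hk : (i : ℕ) ∈ s ∧ (k : ℕ) ∈ s
    · rw [hP.sub_one_eq_zero (fun ⟨h1, _⟩ => hdisj _ hk.2 h1), mul_zero]
    · rw [hM.sub_one_eq_zero hk, zero_mul]
  have hPM : (P - 1) * (M - 1) = 0 := by
    ext i j
    rw [Matrix.mul_apply, Matrix.zero_apply]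
    apply Finset.sum_eq_zero
    intro k _
    by_cases hk : (k : ℕ) ∈ s ∧ (j : ℕ) ∈ s
    · rw [hP.sub_one_eq_zero (fun ⟨_, h2⟩ => hdisj _ hk.1 h2), zero_mul]
    · rw [hM.sub_one_eq_zero hk, mul_zero]
  calc M * P = (M - 1) * (P - 1) + M + P - 1 := by noncomm_ring
  _ = (P - 1) * (M - 1) + M + P - 1 := by rw [hMP, hPM]
  _ = P * M := by noncomm_ring

end SOnPart

section Core

variable {ι₁ ι₂ : Type*} [Fintype ι₁] [Fintype ι₂] [DecidableEq ι₁] [DecidableEq ι₂]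

lemma single_eq_smul_single (t : ι₁) (a : ℂ) :
    (Pi.single t a : ι₁ → ℂ) = a • (Pi.single t 1 : ι₁ → ℂ) := by
  ext i
  rcases eq_or_ne i t with rfl | h
  · simp
  · simp [Pi.single_eq_of_ne h]

/-- The core determinant identity between the two Schur complements. -/
lemma core_det_eq (Al Dl El : Matrix ι₁ ι₁ ℂ) (Aq : Matrix ι₂ ι₂ ℂ)
    (hAl : Al.IsDiag) (hDl : Dl.IsDiag) (hAq : Aq.IsDiag)
    (t : ι₁) (ρ : ℂ) (fr fc : ι₂ → ℂ) (NN : Matrix ι₂ ι₂ ℂ) :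
    det (Al * El * (1 + ρ • vecMulVec (Pi.single t 1 : ι₁ → ℂ) (Pi.single t 1)) + Dl
        - Al * El * vecMulVec (Pi.single t 1 : ι₁ → ℂ) fr * NN * (Aq * vecMulVec fc (Pi.single t 1 : ι₁ → ℂ)))
    = det (Al * (1 + ρ • vecMulVec (Pi.single t 1 : ι₁ → ℂ) (Pi.single t 1)) * El + Dl
        - Al * vecMulVec (Pi.single t 1 : ι₁ → ℂ) fr * NN * (Aq * vecMulVec fc (Pi.single t 1 : ι₁ → ℂ) * El)) := by
  set sm : ι₁ → ℂ := (Pi.single t 1 : ι₁ → ℂ) with hsmdef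
  set kk : ℂ := Matrix.vecMul fr NN ⬝ᵥ (fun b => Aq b b * fc b) with hkk
  set c : ℂ := Dl t t with hc
  set a' : ℂ := Al t t with ha'
  have hAlsm : Al *ᵥ sm = a' • sm := by
    rw [hsmdef, isDiag_mulVec_single hAl, single_eq_smul_single]
  have hsmAl : Matrix.vecMul sm Al = a' • sm := by
    rw [hsmdef, isDiag_single_vecMul hAl, single_eq_smul_single]
  have hDlsm : Dl *ᵥ sm = c • sm := by
    rw [hsmdef, isDiag_mulVec_single hDl, single_eq_smul_single]
  have hsmDl : Matrix.vecMul sm Dl = c • sm := by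
    rw [hsmdef, isDiag_single_vecMul hDl, single_eq_smul_single]
  have f1 : Dl * vecMulVec sm sm = c • vecMulVec sm sm := by
    rw [mul_vecMulVec, hDlsm, smul_vecMulVec]
  have f2 : vecMulVec sm sm * Dl = c • vecMulVec sm sm := by
    rw [vecMulVec_mul, hsmDl, vecMulVec_smul]
  have f3 : Al * vecMulVec sm sm = a' • vecMulVec sm sm := by
    rw [mul_vecMulVec, hAlsm, smul_vecMulVec]
  have f4 : vecMulVec sm sm * Al = a' • vecMulVec sm sm := by
    rw [vecMulVec_mul, hsmAl, vecMulVec_smul]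
  have e1 : Al * El * vecMulVec sm fr * NN * (Aq * vecMulVec fc sm)
      = kk • (Al * El * vecMulVec sm sm) := by
    rw [isDiag_mul_vecMulVec hAq fc sm, mul_vecMulVec (Al * El) sm fr, vecMulVec_mul,
      vecMulVec_mul_vecMulVec, ← mul_vecMulVec, hkk]
  have e2 : Al * vecMulVec sm fr * NN * (Aq * vecMulVec fc sm * El)
      = (a' * kk) • (vecMulVec sm sm * El) := by
    rw [Matrix.mul_assoc Aq, vecMulVec_mul fc sm El, isDiag_mul_vecMulVec hAq, mul_vecMulVec Al sm fr, hAlsm,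
      smul_vecMulVec, Matrix.smul_mul, Matrix.smul_mul, vecMulVec_mul _ _ NN,
      vecMulVec_mul_vecMulVec, ← hkk, smul_smul, ← vecMulVec_mul]
  rw [e1, e2]
  have h1 : Al * El * (1 + ρ • vecMulVec sm sm) + Dl - kk • (Al * El * vecMulVec sm sm)
      = (Al * El + Dl - c • 1) * (1 + (ρ - kk) • vecMulVec sm sm) + c • 1 := by
    simp only [mul_add, add_mul, sub_mul, mul_one, one_mul, smul_mul_assoc, mul_smul_comm, f1]
    module
  have h2 : Al * (1 + ρ • vecMulVec sm sm) * El + Dl - (a' * kk) • (vecMulVec sm sm * El)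
      = (1 + (ρ - kk) • vecMulVec sm sm) * (Al * El + Dl - c • 1) + c • 1 := by
    simp only [mul_add, add_mul, sub_mul, mul_sub, mul_one, one_mul, smul_mul_assoc,
      mul_smul_comm, ← mul_assoc, f2, f3, f4]
    module
  rw [h1, h2]
  exact det_mul_add_smul_one _ _ _

end Core

section LemAInv

/-- embedding of the lower window `{0,…,m}` -/
def embl (n m : ℕ) (hm : m ≤ n) : Fin (m + 1) → Fin (n + 1) :=
  fun i => ⟨i.val, by have := i.isLt; omega⟩

/-- embedding of the upper window `{m+1,…,n}` -/
def embr (n m : ℕ) : Fin (n - m) → Fin (n + 1) :=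
  fun b => ⟨m + 1 + b.val, by have := b.isLt; omega⟩

lemma lemA_inv (n m : ℕ) (hm : m ≤ n) (A D E F : Matrix (Fin (n + 1)) (Fin (n + 1)) ℂ)
    (hA : A.IsDiag) (hD : D.IsDiag)
    (hE : SOn {x | x ≤ m} E) (hF : SOn {x | m ≤ x} F)
    (hInv : IsUnit (Matrix.det (A.submatrix (embr n m) (embr n m) *
      F.submatrix (embr n m) (embr n m) + D.submatrix (embr n m) (embr n m)))) :
    (A * E * F + D).det = (A * F * E + D).det := by
  classical
  have hq : n + 1 = (m + 1) + (n - m) := by omega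
  set e : Fin (n + 1) ≃ (Fin (m + 1) ⊕ Fin (n - m)) := (finCongr hq).trans finSumFinEquiv.symm
    with hedef
  have hel : ∀ a : Fin (m + 1), e.symm (Sum.inl a) = embl n m hm a := by
    intro a
    apply Fin.ext
    simp [hedef, embl]
  have her : ∀ b : Fin (n - m), e.symm (Sum.inr b) = embr n m b := by
    intro b
    apply Fin.ext
    simp [hedef, embr]
  have hvl : ∀ a : Fin (m + 1), ((embl n m hm a : Fin (n + 1)) : ℕ) = a.val := fun _ => rfl
  have hvr : ∀ b : Fin (n - m), ((embr n m b : Fin (n + 1)) : ℕ) = m + 1 + b.val := fun _ => rfl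
  set idxm : Fin (n + 1) := ⟨m, by omega⟩ with hidxm
  set lastm : Fin (m + 1) := Fin.last m with hlastm
  have hemblast : embl n m hm lastm = idxm := by apply Fin.ext; rfl
  set Al := A.submatrix (embl n m hm) (embl n m hm) with hAldef
  set Aq := A.submatrix (embr n m) (embr n m) with hAqdef
  set Dl := D.submatrix (embl n m hm) (embl n m hm) with hDldef
  set Dq := D.submatrix (embr n m) (embr n m) with hDqdef
  set El := E.submatrix (embl n m hm) (embl n m hm) with hEldef
  set Fl := F.submatrix (embl n m hm) (embl n m hm) with hFldef
  set Fh := F.submatrix (embr n m) (embr n m) with hFhdef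
  set sm : Fin (m + 1) → ℂ := Pi.single lastm 1 with hsmdef
  set fr : Fin (n - m) → ℂ := fun b => F idxm (embr n m b) with hfrdef
  set fc : Fin (n - m) → ℂ := fun b => F (embr n m b) idxm with hfcdef
  set ρ : ℂ := F idxm idxm - 1 with hρdef
  have hinjl : Function.Injective (embl n m hm) := by
    intro a b h
    have h2 : (embl n m hm a).val = (embl n m hm b).val := congrArg Fin.val h
    exact Fin.ext h2
  have hinjr : Function.Injective (embr n m) := by
    intro a b h
    apply Fin.ext
    have h2 := congrArg Fin.val h
    simp only [hvr] at h2
    omega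
  have hAl : Al.IsDiag := fun i j hij => hA (fun h => hij (hinjl h))
  have hDl : Dl.IsDiag := fun i j hij => hD (fun h => hij (hinjl h))
  have hAq : Aq.IsDiag := fun i j hij => hA (fun h => hij (hinjr h))
  have hne_lr : ∀ (a : Fin (m + 1)) (b : Fin (n - m)), embl n m hm a ≠ embr n m b := by
    intro a b
    apply Fin.ne_of_val_ne
    rw [hvl, hvr]
    have := a.isLt
    omega
  have hlast_iff : ∀ a : Fin (m + 1), a ≠ lastm → a.val < m := by
    intro a ha
    have h1 := a.isLt
    have h2 : a.val ≠ m := fun h => ha (Fin.ext (by rw [h]; rfl))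
    omega
  -- block forms
  have hA' : reindex e e A = fromBlocks Al 0 0 Aq := by
    ext x y
    rcases x with a | b <;> rcases y with a' | b' <;>
      simp only [reindex_apply, submatrix_apply, hel, her, fromBlocks_apply₁₁,
        fromBlocks_apply₁₂, fromBlocks_apply₂₁, fromBlocks_apply₂₂, Matrix.zero_apply]
    · rfl
    · exact hA (hne_lr a b')
    · exact hA (Ne.symm (hne_lr a' b))
    · rfl
  have hD' : reindex e e D = fromBlocks Dl 0 0 Dq := by
    ext x y
    rcases x with a | b <;> rcases y with a' | b' <;>
      simp only [reindex_apply, submatrix_apply, hel, her, fromBlocks_apply₁₁,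
        fromBlocks_apply₁₂, fromBlocks_apply₂₁, fromBlocks_apply₂₂, Matrix.zero_apply]
    · rfl
    · exact hD (hne_lr a b')
    · exact hD (Ne.symm (hne_lr a' b))
    · rfl
  have hE' : reindex e e E = fromBlocks El 0 0 1 := by
    ext x y
    rcases x with a | b <;> rcases y with a' | b' <;>
      simp only [reindex_apply, submatrix_apply, hel, her, fromBlocks_apply₁₁,
        fromBlocks_apply₁₂, fromBlocks_apply₂₁, fromBlocks_apply₂₂, Matrix.zero_apply]
    · rfl
    · rw [hE _ _ (fun hcon => by
        have := hcon.2
        simp only [hvr, Set.mem_setOf_eq] at this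
        omega)]
      rw [if_neg (hne_lr a b')]
    · rw [hE _ _ (fun hcon => by
        have := hcon.1
        simp only [hvr, Set.mem_setOf_eq] at this
        omega)]
      rw [if_neg (Ne.symm (hne_lr a' b))]
    · rw [hE _ _ (fun hcon => by
        have := hcon.1
        simp only [hvr, Set.mem_setOf_eq] at this
        omega)]
      rw [Matrix.one_apply]
      exact if_congr ⟨fun h => hinjr h, fun h => congrArg _ h⟩ rfl rfl
  have hF' : reindex e e F = fromBlocks Fl (vecMulVec sm fr) (vecMulVec fc sm) Fh := by
    ext x y
    rcases x with a | b <;> rcases y with a' | b' <;>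
      simp only [reindex_apply, submatrix_apply, hel, her, fromBlocks_apply₁₁,
        fromBlocks_apply₁₂, fromBlocks_apply₂₁, fromBlocks_apply₂₂, vecMulVec_apply]
    · rfl
    · rcases eq_or_ne a lastm with rfl | ha
      · rw [hemblast, hsmdef, Pi.single_eq_same, one_mul, hfrdef]
      · have hva : a.val < m := hlast_iff a ha
        rw [hF _ _ (fun hcon => by
          have := hcon.1
          simp only [hvl, Set.mem_setOf_eq] at this
          omega)]
        rw [if_neg (hne_lr a b'), hsmdef, Pi.single_eq_of_ne ha, zero_mul]
    · rcases eq_or_ne a' lastm with rfl | ha'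
      · rw [hemblast, hsmdef, Pi.single_eq_same, mul_one, hfcdef]
      · have hva : a'.val < m := hlast_iff a' ha'
        rw [hF _ _ (fun hcon => by
          have := hcon.2
          simp only [hvl, Set.mem_setOf_eq] at this
          omega)]
        rw [if_neg (Ne.symm (hne_lr a' b)), hsmdef, Pi.single_eq_of_ne ha', mul_zero]
    · rfl
  have hFl : Fl = 1 + ρ • vecMulVec sm sm := by
    ext a a'
    simp only [hFldef, submatrix_apply, Matrix.add_apply, Matrix.smul_apply, vecMulVec_apply,
      smul_eq_mul]
    rcases eq_or_ne a lastm with rfl | ha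
    · rcases eq_or_ne a' lastm with rfl | ha'
      · rw [hemblast, Matrix.one_apply_eq, hsmdef, Pi.single_eq_same, hρdef]
        ring
      · have hva' : a'.val < m := hlast_iff a' ha'
        rw [hF _ _ (fun hcon => by
          have := hcon.2
          simp only [hvl, Set.mem_setOf_eq] at this
          omega)]
        rw [if_neg (fun h => ha' (hinjl h).symm), Matrix.one_apply_ne (fun h => ha' h.symm)]
        simp [hsmdef, Pi.single_eq_of_ne ha']
    · have hva : a.val < m := hlast_iff a ha
      rw [hF _ _ (fun hcon => by
        have := hcon.1
        simp only [hvl, Set.mem_setOf_eq] at this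
        omega)]
      rw [hsmdef, Pi.single_eq_of_ne ha, zero_mul, mul_zero, add_zero, Matrix.one_apply]
      exact if_congr ⟨fun h => hinjl h, fun h => congrArg _ h⟩ rfl rfl
  -- reindexing is multiplicative and additive
  have hmulr : ∀ X Y : Matrix (Fin (n + 1)) (Fin (n + 1)) ℂ,
      reindex e e (X * Y) = reindex e e X * reindex e e Y := by
    intro X Y
    simpa using map_mul (Matrix.reindexAlgEquiv ℂ ℂ e) X Y
  have haddr : ∀ X Y : Matrix (Fin (n + 1)) (Fin (n + 1)) ℂ,
      reindex e e (X + Y) = reindex e e X + reindex e e Y := by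
    intro X Y
    simpa using map_add (Matrix.reindexAlgEquiv ℂ ℂ e) X Y
  haveI : Invertible (Aq * Fh + Dq) := Matrix.invertibleOfIsUnitDet _ hInv
  calc (A * E * F + D).det
      = (reindex e e (A * E * F + D)).det := (Matrix.det_reindex_self e _).symm
    _ = (fromBlocks (Al * El * Fl + Dl) (Al * El * vecMulVec sm fr)
          (Aq * vecMulVec fc sm) (Aq * Fh + Dq)).det := by
        rw [haddr, hmulr, hmulr, hA', hE', hF', hD']
        simp only [Matrix.fromBlocks_multiply, Matrix.fromBlocks_add, Matrix.mul_zero,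
          Matrix.zero_mul, Matrix.mul_one, Matrix.one_mul, add_zero, zero_add]
    _ = (Aq * Fh + Dq).det * (Al * El * Fl + Dl
          - Al * El * vecMulVec sm fr * ⅟(Aq * Fh + Dq) * (Aq * vecMulVec fc sm)).det :=
        det_fromBlocks₂₂ _ _ _ _
    _ = (Aq * Fh + Dq).det * (Al * Fl * El + Dl
          - Al * vecMulVec sm fr * ⅟(Aq * Fh + Dq) * (Aq * vecMulVec fc sm * El)).det := by
        congr 1
        rw [hFl, hsmdef]
        exact core_det_eq Al Dl El Aq hAl hDl hAq lastm ρ fr fc (⅟(Aq * Fh + Dq))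
    _ = (fromBlocks (Al * Fl * El + Dl) (Al * vecMulVec sm fr)
          (Aq * vecMulVec fc sm * El) (Aq * Fh + Dq)).det := (det_fromBlocks₂₂ _ _ _ _).symm
    _ = (reindex e e (A * F * E + D)).det := by
        rw [haddr, hmulr, hmulr, hA', hF', hE', hD']
        simp only [Matrix.fromBlocks_multiply, Matrix.fromBlocks_add, Matrix.mul_zero,
          Matrix.zero_mul, Matrix.mul_one, Matrix.one_mul, add_zero, zero_add]
    _ = (A * F * E + D).det := Matrix.det_reindex_self e _

end LemAInv

section LemA

lemma lemA (n m : ℕ) (hm : m ≤ n) (A D E F : Matrix (Fin (n + 1)) (Fin (n + 1)) ℂ)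
    (hA : A.IsDiag) (hD : D.IsDiag)
    (hE : SOn {x | x ≤ m} E) (hF : SOn {x | m ≤ x} F) :
    (A * E * F + D).det = (A * F * E + D).det := by
  classical
  set M2 : Matrix (Fin (n - m)) (Fin (n - m)) ℂ :=
    A.submatrix (embr n m) (embr n m) * F.submatrix (embr n m) (embr n m)
      + D.submatrix (embr n m) (embr n m) with hM2
  have hmapeval : ∀ (M : Matrix (Fin (n + 1)) (Fin (n + 1)) ℂ) (s : ℂ),
      (M.map Polynomial.C + (Polynomial.X : Polynomial ℂ) • 1).map (Polynomial.evalRingHom s)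
        = M + s • 1 := by
    intro M s
    ext i j
    by_cases hij : i = j <;>
      simp [Matrix.map_apply, Matrix.one_apply, hij]
  have heval : ∀ (M : Matrix (Fin (n + 1)) (Fin (n + 1)) ℂ) (s : ℂ),
      Polynomial.eval s (M.map Polynomial.C + (Polynomial.X : Polynomial ℂ) • 1).det
        = (M + s • 1).det := by
    intro M s
    have h := RingHom.map_det (Polynomial.evalRingHom s)
      (M.map Polynomial.C + (Polynomial.X : Polynomial ℂ) • 1)
    rw [RingHom.mapMatrix_apply, hmapeval] at h
    simpa using h
  set p₁ : Polynomial ℂ :=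
    ((A * E * F + D).map Polynomial.C + (Polynomial.X : Polynomial ℂ) • 1).det with hp₁
  set p₂ : Polynomial ℂ :=
    ((A * F * E + D).map Polynomial.C + (Polynomial.X : Polynomial ℂ) • 1).det with hp₂
  have hchar : ∀ s : ℂ, Polynomial.eval s (Matrix.charpoly (-M2)) = (M2 + s • 1).det := by
    intro s
    rw [Matrix.charpoly]
    have h := RingHom.map_det (Polynomial.evalRingHom s) (Matrix.charmatrix (-M2))
    rw [RingHom.mapMatrix_apply] at h
    have h2 : (Matrix.charmatrix (-M2)).map (Polynomial.evalRingHom s) = M2 + s • 1 := by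
      ext i j
      by_cases hij : i = j
      · subst hij
        simp [Matrix.charmatrix_apply_eq, add_comm]
      · simp [Matrix.charmatrix_apply_ne _ _ _ hij, Matrix.one_apply_ne hij, hij]
    rw [h2] at h
    simpa using h
  have hfin : {s : ℂ | Polynomial.eval s (Matrix.charpoly (-M2)) = 0}.Finite :=
    Polynomial.finite_setOf_isRoot (Matrix.charpoly_monic (-M2)).ne_zero
  have hDsub : ∀ s : ℂ, (D + s • 1).submatrix (embr n m) (embr n m)
      = D.submatrix (embr n m) (embr n m) + s • 1 := by
    intro s
    ext i j
    have hinj : embr n m i = embr n m j ↔ i = j := by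
      constructor
      · intro h
        apply Fin.ext
        have h2 := congrArg Fin.val h
        simp only [embr] at h2
        omega
      · exact fun h => congrArg _ h
    by_cases hij : i = j
    · subst hij; simp [Matrix.submatrix_apply, Matrix.one_apply]
    · have hne : embr n m i ≠ embr n m j := fun h => hij (hinj.mp h)
      simp [Matrix.submatrix_apply, Matrix.one_apply, hij, hne]
  have hsub : {s : ℂ | Polynomial.eval s (Matrix.charpoly (-M2)) = 0}ᶜ ⊆
      {s : ℂ | Polynomial.eval s p₁ = Polynomial.eval s p₂} := by
    intro s hs
    simp only [Set.mem_compl_iff, Set.mem_setOf_eq, hchar s] at hs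
    simp only [Set.mem_setOf_eq, hp₁, hp₂, heval]
    have h1 : A * E * F + D + s • 1 = A * E * F + (D + s • 1) := by rw [add_assoc]
    have h2 : A * F * E + D + s • 1 = A * F * E + (D + s • 1) := by rw [add_assoc]
    rw [h1, h2]
    have hDdiag : (D + s • 1).IsDiag := by
      intro i j hij
      simp [Matrix.one_apply_ne hij, hD hij]
    have hInv : IsUnit (Matrix.det (A.submatrix (embr n m) (embr n m) *
        F.submatrix (embr n m) (embr n m) + (D + s • 1).submatrix (embr n m) (embr n m))) := by
      rw [hDsub s, ← add_assoc, ← hM2]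
      exact isUnit_iff_ne_zero.mpr hs
    exact lemA_inv n m hm A (D + s • 1) E F hA hDdiag hE hF hInv
  have hinf : {s : ℂ | Polynomial.eval s p₁ = Polynomial.eval s p₂}.Infinite :=
    (Set.Finite.infinite_compl hfin).mono hsub
  have hpq : p₁ = p₂ := Polynomial.eq_of_infinite_eval_eq p₁ p₂ hinf
  have h1 := heval (A * E * F + D) 0
  have h2 := heval (A * F * E + D) 0
  rw [← hp₁] at h1
  rw [← hp₂] at h2
  have hfinal : (A * E * F + D + (0 : ℂ) • 1).det = (A * F * E + D + (0 : ℂ) • 1).det := by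
    rw [← h1, hpq, h2]
  simpa using hfinal

end LemA

section PermMachinery

lemma mul_left_swap {N : ℕ} {a b : Matrix (Fin N) (Fin N) ℂ} (h : a * b = b * a)
    (w : Matrix (Fin N) (Fin N) ℂ) : a * (b * w) = b * (a * w) := by
  rw [← Matrix.mul_assoc, h, Matrix.mul_assoc]

variable {n : ℕ}

/-- product of the G-matrices along a list of indices -/
def prodG (G : Fin n → Matrix (Fin (n + 1)) (Fin (n + 1)) ℂ) (l : List (Fin n)) :
    Matrix (Fin (n + 1)) (Fin (n + 1)) ℂ := (l.map G).prod

lemma prodG_nil (G : Fin n → Matrix (Fin (n + 1)) (Fin (n + 1)) ℂ) : prodG G [] = 1 := rfl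

lemma prodG_cons (G : Fin n → Matrix (Fin (n + 1)) (Fin (n + 1)) ℂ) (k : Fin n)
    (l : List (Fin n)) : prodG G (k :: l) = G k * prodG G l := by
  simp [prodG]

lemma prodG_append (G : Fin n → Matrix (Fin (n + 1)) (Fin (n + 1)) ℂ) (l₁ l₂ : List (Fin n)) :
    prodG G (l₁ ++ l₂) = prodG G l₁ * prodG G l₂ := by
  simp [prodG]

lemma sOn_G {G : Fin n → Matrix (Fin (n + 1)) (Fin (n + 1)) ℂ}
    (hG : ∀ k : Fin n, IsGMat k (G k)) (k : Fin n) :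
    SOn {x | x = (k : ℕ) ∨ x = (k : ℕ) + 1} (G k) := by
  intro i j hij
  apply hG k i j
  rintro ⟨h1, h2⟩
  apply hij
  constructor
  · rcases h1 with h | h
    · left; rw [h]; simp
    · right; rw [h]; simp
  · rcases h2 with h | h
    · left; rw [h]; simp
    · right; rw [h]; simp

lemma sOn_G_window {G : Fin n → Matrix (Fin (n + 1)) (Fin (n + 1)) ℂ}
    (hG : ∀ k : Fin n, IsGMat k (G k)) (k : Fin n) {s : Set ℕ}
    (h1 : (k : ℕ) ∈ s) (h2 : (k : ℕ) + 1 ∈ s) : SOn s (G k) :=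
  (sOn_G hG k).mono (by rintro x (rfl | rfl) <;> assumption)

lemma prodG_split {G : Fin n → Matrix (Fin (n + 1)) (Fin (n + 1)) ℂ}
    (hG : ∀ k : Fin n, IsGMat k (G k)) (m : ℕ) (l : List (Fin n))
    (hcond : ∀ j ∈ l, (j : ℕ) + 1 < m ∨ m < (j : ℕ)) :
    ∃ L R : Matrix (Fin (n + 1)) (Fin (n + 1)) ℂ,
      SOn {x | x < m} L ∧ SOn {x | m < x} R ∧ prodG G l = L * R := by
  induction l with
  | nil => exact ⟨1, 1, SOn.one _, SOn.one _, by rw [prodG_nil, Matrix.one_mul]⟩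
  | cons j l ih =>
    obtain ⟨L, R, hL, hR, hLR⟩ := ih (fun x hx => hcond x (List.mem_cons_of_mem _ hx))
    rcases hcond j (List.mem_cons_self) with hj | hj
    · have hw : SOn {x | x < m} (G j) :=
        sOn_G_window (s := {x | x < m}) hG j (show (j:ℕ) < m by omega)
          (show (j:ℕ) + 1 < m by omega)
      exact ⟨G j * L, R, SOn.mul hw hL, hR, by rw [prodG_cons, hLR, Matrix.mul_assoc]⟩
    · have hw : SOn {x | m < x} (G j) :=
        sOn_G_window (s := {x | m < x}) hG j (show m < (j:ℕ) by omega)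
          (show m < (j:ℕ) + 1 by omega)
      refine ⟨L, G j * R, hL, SOn.mul hw hR, ?_⟩
      rw [prodG_cons, hLR, ← Matrix.mul_assoc,
        SOn.comm hw hL (fun a (ha : m < a) (hb : a < m) => by omega), Matrix.mul_assoc]

lemma swap_adjacent {G : Fin n → Matrix (Fin (n + 1)) (Fin (n + 1)) ℂ}
    (hG : ∀ k : Fin n, IsGMat k (G k))
    (A D : Matrix (Fin (n + 1)) (Fin (n + 1)) ℂ) (hA : A.IsDiag) (hD : D.IsDiag)
    (x y : Fin n) (hxy : (y : ℕ) + 1 = (x : ℕ))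
    (r l : List (Fin n)) (hr : ∀ j ∈ r, (j : ℕ) ≠ (x : ℕ) ∧ (j : ℕ) ≠ (y : ℕ))
    (hl : ∀ j ∈ l, (j : ℕ) ≠ (x : ℕ) ∧ (j : ℕ) ≠ (y : ℕ)) :
    (A * (prodG G r * (G y * (G x * prodG G l))) + D).det
      = (A * (prodG G r * (G x * (G y * prodG G l))) + D).det := by
  set m : ℕ := (x : ℕ) with hmdef
  have hm : m ≤ n := le_of_lt x.isLt
  obtain ⟨RL, RR, hRL, hRR, hRLR⟩ :=
    prodG_split hG m r (fun j hj => by have := hr j hj; omega)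
  obtain ⟨PL, PR, hPL, hPR, hPLR⟩ :=
    prodG_split hG m l (fun j hj => by have := hl j hj; omega)
  have hGy : SOn {t | t ≤ m} (G y) :=
    sOn_G_window (s := {t | t ≤ m}) hG y (show (y:ℕ) ≤ m by omega)
      (show (y:ℕ) + 1 ≤ m by omega)
  have hGx : SOn {t | m ≤ t} (G x) :=
    sOn_G_window (s := {t | m ≤ t}) hG x (show m ≤ (x:ℕ) by omega)
      (show m ≤ (x:ℕ) + 1 by omega)
  have hRL' : SOn {t | t ≤ m} RL := hRL.mono (fun a (ha : a < m) => le_of_lt ha)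
  have hPL' : SOn {t | t ≤ m} PL := hPL.mono (fun a (ha : a < m) => le_of_lt ha)
  have hRR' : SOn {t | m ≤ t} RR := hRR.mono (fun a (ha : m < a) => le_of_lt ha)
  have hPR' : SOn {t | m ≤ t} PR := hPR.mono (fun a (ha : m < a) => le_of_lt ha)
  have hGyw : SOn {t | t = (y:ℕ) ∨ t = (y:ℕ)+1} (G y) := sOn_G hG y
  have hGxw : SOn {t | t = (x:ℕ) ∨ t = (x:ℕ)+1} (G x) := sOn_G hG x
  have c1 : RR * G y = G y * RR :=
    SOn.comm hRR hGyw (fun a (ha : m < a) (hb : a = (y:ℕ) ∨ a = (y:ℕ) + 1) => by omega)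
  have c2 : RR * PL = PL * RR :=
    SOn.comm hRR hPL (fun a (ha : m < a) (hb : a < m) => by omega)
  have c3 : G x * PL = PL * G x :=
    SOn.comm hGxw hPL (fun a (ha : a = (x:ℕ) ∨ a = (x:ℕ) + 1) (hb : a < m) => by omega)
  have c5 : RL * RR = RR * RL :=
    SOn.comm hRL hRR (fun a (ha : a < m) (hb : m < a) => by omega)
  have c6 : RL * G x = G x * RL :=
    SOn.comm hRL hGxw (fun a (ha : a < m) (hb : a = (x:ℕ) ∨ a = (x:ℕ) + 1) => by omega)
  have c7 : PL * PR = PR * PL :=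
    SOn.comm hPL hPR (fun a (ha : a < m) (hb : m < a) => by omega)
  have c8 : G y * PR = PR * G y :=
    SOn.comm hGyw hPR (fun a (ha : a = (y:ℕ) ∨ a = (y:ℕ) + 1) (hb : m < a) => by omega)
  have c9 : RL * PR = PR * RL :=
    SOn.comm hRL hPR (fun a (ha : a < m) (hb : m < a) => by omega)
  have hE : SOn {t | t ≤ m} (RL * (G y * PL)) := hRL'.mul (hGy.mul hPL')
  have hF : SOn {t | m ≤ t} (RR * (G x * PR)) := hRR'.mul (hGx.mul hPR')
  have h₁ : RL * RR * (G y * (G x * (PL * PR))) = RL * (G y * PL) * (RR * (G x * PR)) := by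
    rw [Matrix.mul_assoc RL RR, mul_left_swap c1, mul_left_swap c3, mul_left_swap c2]
    simp only [Matrix.mul_assoc]
  have h₂ : RL * RR * (G x * (G y * (PL * PR))) = RR * (G x * PR) * (RL * (G y * PL)) := by
    rw [Matrix.mul_assoc RL RR, mul_left_swap c5, mul_left_swap c6, c7, mul_left_swap c8,
      mul_left_swap c9]
    simp only [Matrix.mul_assoc]
  rw [hRLR, hPLR, h₁, h₂,
    show A * (RL * (G y * PL) * (RR * (G x * PR)))
      = A * (RL * (G y * PL)) * (RR * (G x * PR)) from (Matrix.mul_assoc _ _ _).symm,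
    show A * (RR * (G x * PR) * (RL * (G y * PL)))
      = A * (RR * (G x * PR)) * (RL * (G y * PL)) from (Matrix.mul_assoc _ _ _).symm]
  exact lemA n m hm A D (RL * (G y * PL)) (RR * (G x * PR)) hA hD hE hF

lemma main_perm {G : Fin n → Matrix (Fin (n + 1)) (Fin (n + 1)) ℂ}
    (hG : ∀ k : Fin n, IsGMat k (G k))
    (A D : Matrix (Fin (n + 1)) (Fin (n + 1)) ℂ) (hA : A.IsDiag) (hD : D.IsDiag)
    {l₁ l₂ : List (Fin n)} (hperm : l₁.Perm l₂) :
    l₁.Nodup → ∀ r : List (Fin n), (∀ j ∈ r, j ∉ l₁) →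
      (A * (prodG G r * prodG G l₁) + D).det = (A * (prodG G r * prodG G l₂) + D).det := by
  induction hperm with
  | nil => intro _ r _; rfl
  | cons z hperm ih =>
    intro hnd r hr
    have hshift : ∀ P, prodG G r * (G z * P) = prodG G (r ++ [z]) * P := by
      intro P
      rw [prodG_append, prodG_cons, prodG_nil, Matrix.mul_one, Matrix.mul_assoc]
    rw [prodG_cons, prodG_cons, hshift, hshift]
    have hnd' := List.nodup_cons.mp hnd
    refine ih hnd'.2 (r ++ [z]) ?_
    intro j hj
    rcases List.mem_append.mp hj with hjr | hjz
    · exact fun hmem => hr j hjr (List.mem_cons_of_mem _ hmem)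
    · have : j = z := by simpa using hjz
      subst this
      exact hnd'.1
  | swap x y l =>
    intro hnd r hr
    have hnd1 := List.nodup_cons.mp hnd
    have hnd2 := List.nodup_cons.mp hnd1.2
    have hyx : y ≠ x := fun h => hnd1.1 (h ▸ List.mem_cons_self)
    have hxl : x ∉ l := hnd2.1
    have hyl : y ∉ l := fun h => hnd1.1 (List.mem_cons_of_mem _ h)
    have hrj : ∀ j ∈ r, (j : ℕ) ≠ (x : ℕ) ∧ (j : ℕ) ≠ (y : ℕ) := by
      intro j hj
      have hmem := hr j hj
      constructor
      · intro hv
        exact hmem (by rw [Fin.ext hv]; exact List.mem_cons_of_mem _ (List.mem_cons_self))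
      · intro hv
        exact hmem (by rw [Fin.ext hv]; exact List.mem_cons_self)
    have hlj : ∀ j ∈ l, (j : ℕ) ≠ (x : ℕ) ∧ (j : ℕ) ≠ (y : ℕ) := by
      intro j hj
      constructor
      · exact fun hv => hxl (Fin.ext hv ▸ hj)
      · exact fun hv => hyl (Fin.ext hv ▸ hj)
    rw [prodG_cons, prodG_cons, prodG_cons, prodG_cons]
    rcases lt_trichotomy (y : ℕ) (x : ℕ) with hlt | heq | hgt
    · rcases eq_or_lt_of_le (Nat.succ_le_of_lt hlt) with hadj | hfar
      · exact swap_adjacent hG A D hA hD x y hadj r l hrj hlj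
      · have hcomm : G y * G x = G x * G y :=
          SOn.comm (sOn_G hG y) (sOn_G hG x)
            (fun a ha hb => by simp only [Set.mem_setOf_eq] at ha hb; omega)
        rw [mul_left_swap hcomm]
    · exact absurd (Fin.ext heq) hyx
    · rcases eq_or_lt_of_le (Nat.succ_le_of_lt hgt) with hadj | hfar
      · exact (swap_adjacent hG A D hA hD y x hadj r l
          (fun j hj => ⟨(hrj j hj).2, (hrj j hj).1⟩)
          (fun j hj => ⟨(hlj j hj).2, (hlj j hj).1⟩)).symm
      · have hcomm : G y * G x = G x * G y :=
          SOn.comm (sOn_G hG y) (sOn_G hG x)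
            (fun a ha hb => by simp only [Set.mem_setOf_eq] at ha hb; omega)
        rw [mul_left_swap hcomm]
  | trans h₁ h₂ ih₁ ih₂ =>
    intro hnd r hr
    refine (ih₁ hnd r hr).trans (ih₂ (h₁.nodup_iff.mp hnd) r ?_)
    intro j hj hmem
    exact hr j hj (h₁.mem_iff.mpr hmem)

end PermMachinery

section Final

lemma eval_charpoly_det {N : ℕ} (M : Matrix (Fin N) (Fin N) ℂ) (x : ℂ) :
    Polynomial.eval x M.charpoly = (x • 1 - M).det := by
  rw [Matrix.charpoly]
  have h := RingHom.map_det (Polynomial.evalRingHom x) (Matrix.charmatrix M)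
  rw [RingHom.mapMatrix_apply] at h
  have h2 : (Matrix.charmatrix M).map (Polynomial.evalRingHom x) = x • 1 - M := by
    ext i j
    by_cases hij : i = j
    · subst hij
      simp [Matrix.charmatrix_apply_eq]
    · simp [Matrix.charmatrix_apply_ne _ _ _ hij, Matrix.one_apply_ne hij, hij]
  rw [h2] at h
  simpa using h

lemma det_invariance {n : ℕ} (G : Fin n → Matrix (Fin (n + 1)) (Fin (n + 1)) ℂ)
    (hG : ∀ k : Fin n, IsGMat k (G k))
    (A D : Matrix (Fin (n + 1)) (Fin (n + 1)) ℂ) (hA : A.IsDiag) (hD : D.IsDiag)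
    (π₁ π₂ : Equiv.Perm (Fin n)) :
    (A * Mperm G π₁ + D).det = (A * Mperm G π₂ + D).det := by
  have hM : ∀ π : Equiv.Perm (Fin n), Mperm G π = prodG G (List.ofFn π) := by
    intro π
    unfold Mperm prodG
    rw [List.map_ofFn]
    rfl
  have hperm : (List.ofFn π₁).Perm (List.ofFn π₂) := by
    apply List.perm_of_nodup_nodup_toFinset_eq
    · exact List.nodup_ofFn.mpr π₁.injective
    · exact List.nodup_ofFn.mpr π₂.injective
    · apply Finset.ext
      intro a
      simp only [List.mem_toFinset, List.mem_ofFn]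
      constructor
      · intro _; exact ⟨π₂.symm a, π₂.apply_symm_apply a⟩
      · intro _; exact ⟨π₁.symm a, π₁.apply_symm_apply a⟩
  have h := main_perm hG A D hA hD hperm (List.nodup_ofFn.mpr π₁.injective) []
    (by intro j hj; simp at hj)
  rw [prodG_nil, Matrix.one_mul, Matrix.one_mul, ← hM π₁, ← hM π₂] at h
  exact h

end Final

end Stmt18Aux

/-- Corollary `corAMPD4`: the determinant — hence also the
characteristic polynomial and the eigenvalues — of the AMPD matrix A·M_π + D does
not depend on the permutation π. -/
theorem stmt18 (n : ℕ) (G : Fin n → Matrix (Fin (n + 1)) (Fin (n + 1)) ℂ)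
    (hG : ∀ k : Fin n, IsGMat k (G k))
    (A D : Matrix (Fin (n + 1)) (Fin (n + 1)) ℂ) (hA : A.IsDiag) (hD : D.IsDiag)
    (π₁ π₂ : Equiv.Perm (Fin n)) :
    (A * Mperm G π₁ + D).det = (A * Mperm G π₂ + D).det ∧
    (A * Mperm G π₁ + D).charpoly = (A * Mperm G π₂ + D).charpoly ∧
    ∀ lam : ℂ, ((A * Mperm G π₁ + D - lam • 1).det = 0 ↔
      (A * Mperm G π₂ + D - lam • 1).det = 0) := by
  have key : ∀ (A' D' : Matrix (Fin (n + 1)) (Fin (n + 1)) ℂ), A'.IsDiag → D'.IsDiag →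
      (A' * Mperm G π₁ + D').det = (A' * Mperm G π₂ + D').det :=
    fun A' D' hA' hD' => Stmt18Aux.det_invariance G hG A' D' hA' hD' π₁ π₂
  refine ⟨key A D hA hD, ?_, ?_⟩
  · apply Polynomial.funext
    intro x
    rw [Stmt18Aux.eval_charpoly_det, Stmt18Aux.eval_charpoly_det]
    have hrw : ∀ π : Equiv.Perm (Fin n),
        x • (1 : Matrix (Fin (n + 1)) (Fin (n + 1)) ℂ) - (A * Mperm G π + D)
          = (-A) * Mperm G π + (x • 1 - D) := by
      intro π
      rw [Matrix.neg_mul]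
      abel
    rw [hrw π₁, hrw π₂]
    exact key (-A) (x • 1 - D)
      (fun i j hij => by simp [hA hij])
      (fun i j hij => by simp [Matrix.one_apply_ne hij, hD hij])
  · intro lam
    have hrw : ∀ π : Equiv.Perm (Fin n),
        A * Mperm G π + D - lam • 1 = A * Mperm G π + (D - lam • 1) := by
      intro π
      abel
    rw [hrw π₁, hrw π₂,
      key A (D - lam • 1) hA (fun i j hij => by simp [Matrix.one_apply_ne hij, hD hij])]
end
end
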